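/- arXiv:2501.04720 — 13 statements merged into one kernel-verified Lean document; each statement's English description precedes it below -/
import Mathlib

section
/- Let R be a ΔU ring. Then: (1) the sum of any two units of R lies in Δ(R); (2) every unit of R is uniquely clean, in the sense that whenever a unit u of R is written as u = e + v with e an idempotent and v a unit, necessarily e = 0 (and v = u); (3) the only idempotent of R that can be written as a sum of two units of R is 0. -/
/-- `Δ(R) = {r ∈ R : r + u is a unit for every unit u of R}`. -/
def Delta (R : Type*) [Ring R] : Set R := {r : R | ∀ u : Rˣ, IsUnit (r + (u : R))}

/-- A ring `R` is a ΔU ring if every unit `u` satisfies `u - 1 ∈ Δ(R)`. -/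
def IsDeltaU (R : Type*) [Ring R] : Prop := ∀ u : Rˣ, (u : R) - 1 ∈ Delta R

lemma delta_add {R : Type*} [Ring R] {a b : R} (ha : a ∈ Delta R) (hb : b ∈ Delta R) :
    a + b ∈ Delta R := by
  intro u
  obtain ⟨w, hw⟩ := hb u
  have := ha w
  rw [hw] at this
  rwa [add_assoc]

lemma delta_neg {R : Type*} [Ring R] {a : R} (ha : a ∈ Delta R) : -a ∈ Delta R := by
  intro u
  have := (ha (-u)).neg
  have h : -(a + ((-u : Rˣ) : R)) = -a + (u : R) := by
    simp [add_comm]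
  rwa [h] at this

lemma delta_unit_mul {R : Type*} [Ring R] {a : R} (ha : a ∈ Delta R) (u : Rˣ) :
    (u : R) * a ∈ Delta R := by
  intro w
  have := u.isUnit.mul (ha (u⁻¹ * w))
  have h : (u : R) * (a + ((u⁻¹ * w : Rˣ) : R)) = (u : R) * a + (w : R) := by
    rw [mul_add, Units.val_mul, ← mul_assoc]
    simp
  rwa [h] at this

lemma delta_idem_zero {R : Type*} [Ring R] {e : R} (he : e * e = e) (hd : e ∈ Delta R) :
    e = 0 := by
  obtain ⟨w, hw⟩ := hd (-1)
  have hval : (w : R) = e - 1 := by push_cast at hw; rw [hw, sub_eq_add_neg]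
  have h0 : e * (w : R) = 0 := by rw [hval]; rw [mul_sub, he, mul_one, sub_self]
  calc e = e * (w : R) * ((w⁻¹ : Rˣ) : R) := by
        rw [mul_assoc]; simp
    _ = 0 := by rw [h0, zero_mul]

lemma delta_two {R : Type*} [Ring R] (hR : IsDeltaU R) : (2 : R) ∈ Delta R := by
  have := delta_neg (hR (-1))
  have h : -(((-1 : Rˣ) : R) - 1) = (2 : R) := by push_cast; rw [← one_add_one_eq_two]; abel
  rwa [h] at this

lemma delta_unit_add {R : Type*} [Ring R] (hR : IsDeltaU R) (u v : Rˣ) :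
    ((u : R) + (v : R)) ∈ Delta R := by
  have := delta_add (delta_add (hR u) (hR v)) (delta_two hR)
  have h : (u : R) - 1 + ((v : R) - 1) + 2 = (u : R) + (v : R) := by rw [← one_add_one_eq_two]; abel
  rwa [h] at this

theorem deltaU_unit_sum_and_uniquely_clean (R : Type*) [Ring R] (hR : IsDeltaU R) :
    (∀ u v : Rˣ, ((u : R) + (v : R)) ∈ Delta R) ∧
    (∀ (u v : Rˣ) (e : R), e * e = e → (u : R) = e + (v : R) → e = 0 ∧ (v : R) = (u : R)) ∧
    (∀ e : R, e * e = e → (∃ u v : Rˣ, e = (u : R) + (v : R)) → e = 0) := by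
  refine ⟨delta_unit_add hR, ?_, ?_⟩
  · intro u v e he heq
    have h1 := hR (v⁻¹ * u)
    have h2 : ((v⁻¹ * u : Rˣ) : R) - 1 = ((v⁻¹ : Rˣ) : R) * e := by
      rw [Units.val_mul]
      have : (u : R) - (v : R) = e := by rw [heq]; noncomm_ring
      calc ((v⁻¹ : Rˣ) : R) * (u : R) - 1
          = ((v⁻¹ : Rˣ) : R) * ((u : R) - (v : R)) := by
            rw [mul_sub]; simp
        _ = ((v⁻¹ : Rˣ) : R) * e := by rw [this]
    rw [h2] at h1
    have h3 := delta_unit_mul h1 v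
    have h4 : (v : R) * (((v⁻¹ : Rˣ) : R) * e) = e := by
      rw [← mul_assoc]; simp
    rw [h4] at h3
    have he0 := delta_idem_zero he h3
    exact ⟨he0, by rw [heq, he0, zero_add]⟩
  · intro e he ⟨u, v, heq⟩
    exact delta_idem_zero he (heq ▸ delta_unit_add hR u v)
end

section
/- Let R be a von Neumann regular ring. The following are equivalent: (i) R is a ΔU ring; (ii) R is a UJ ring; (iii) R is a UU ring; (iv) R is a Boolean ring (x² = x for all x ∈ R). -/
section Helpers

variable {R : Type*} [Ring R]

lemma myIsUnit (a b : R) (h1 : a * b = 1) (h2 : b * a = 1) : IsUnit a := ⟨⟨a,b,h1,h2⟩, rfl⟩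

lemma one_add_swap {a b : R} (h : IsUnit (1 + a * b)) : IsUnit (1 + b * a) := by
  obtain ⟨u, hu⟩ := h
  set w : R := ↑u⁻¹ with hw
  have hw1 : (1 + a * b) * w = 1 := by rw [← hu]; exact u.mul_inv
  have hw2 : w * (1 + a * b) = 1 := by rw [← hu]; exact u.inv_mul
  refine myIsUnit _ (1 - b * w * a) ?_ ?_
  · calc (1 + b * a) * (1 - b * w * a) = 1 + b*a - b*((1 + a*b)*w)*a := by noncomm_ring
    _ = 1 := by rw [hw1]; noncomm_ring
  · calc (1 - b * w * a) * (1 + b * a) = 1 + b*a - b*(w*(1 + a*b))*a := by noncomm_ring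
    _ = 1 := by rw [hw2]; noncomm_ring

lemma unit_of_sq_zero {a : R} (h : a * a = 0) : IsUnit (1 + a) := by
  refine myIsUnit _ (1 - a) ?_ ?_
  · calc (1+a)*(1-a) = 1 - a*a := by noncomm_ring
    _ = 1 := by rw [h, sub_zero]
  · calc (1-a)*(1+a) = 1 - a*a := by noncomm_ring
    _ = 1 := by rw [h, sub_zero]

lemma eq_zero_of_forall_unit (hreg : ∀ a : R, ∃ x : R, a = a * x * a) {t : R}
    (h : ∀ z : R, IsUnit (1 + z * t)) : t = 0 := by
  obtain ⟨y, hy⟩ := hreg t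
  have hb : (y * t) * (y * t) = y * t := by
    conv_lhs => rw [mul_assoc, ← mul_assoc t y t, ← hy]
  obtain ⟨u, hu⟩ := h (-y)
  have hu' : (1 - y * t) = (u : R) := by rw [hu, sub_eq_add_neg, neg_mul]
  have hb0 : y * t = 0 := by
    have h1 : (y*t) * (1 - y*t) = 0 := by rw [mul_sub, mul_one, hb, sub_self]
    calc y*t = ((y*t) * (u:R)) * ↑u⁻¹ := by rw [mul_assoc, u.mul_inv, mul_one]
    _ = 0 := by rw [← hu', h1, zero_mul]
  calc t = t * y * t := hy
  _ = t * (y * t) := by rw [mul_assoc]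
  _ = 0 := by rw [hb0, mul_zero]

lemma hplus_of_two (h2 : (2:R) = 0) : ∀ t : R, t + t = 0 := by
  intro t; rw [← two_mul, h2, zero_mul]

lemma jac_bot_zero (hreg : ∀ a : R, ∃ x : R, a = a * x * a) {a : R}
    (ha : a ∈ Ideal.jacobson (⊥ : Ideal R)) : a = 0 := by
  obtain ⟨x, hx⟩ := hreg a
  have hb : x * a ∈ Ideal.jacobson (⊥ : Ideal R) := Ideal.mul_mem_left _ x ha
  obtain ⟨z, hz⟩ := Ideal.mem_jacobson_iff.mp hb (-1)
  have hz' : z * (-1) * (x * a) + z - 1 = 0 := by simpa using hz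
  rw [sub_eq_zero] at hz'
  have h1 : z * (1 - x * a) = 1 := by
    calc z * (1 - x * a) = z * (-1) * (x * a) + z := by noncomm_ring
    _ = 1 := hz'
  have hbb : (x * a) * (x * a) = x * a := by
    conv_lhs => rw [mul_assoc, ← mul_assoc a x a, ← hx]
  have hb0 : x * a = 0 := by
    calc x * a = (z * (1 - x * a)) * (x * a) := by rw [h1, one_mul]
    _ = z * ((x * a) - (x * a) * (x * a)) := by noncomm_ring
    _ = 0 := by rw [hbb, sub_self, mul_zero]
  calc a = a * x * a := hx
  _ = a * (x * a) := by rw [mul_assoc]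
  _ = 0 := by rw [hb0, mul_zero]

lemma two_zero (hreg : ∀ a : R, ∃ x : R, a = a * x * a) (h2 : IsNilpotent (2:R)) :
    (2:R) = 0 := by
  obtain ⟨x, hx⟩ := hreg 2
  have hc : Commute x (2:R) := by show x * 2 = 2 * x; rw [mul_two, two_mul]
  have hm : IsNilpotent (x * 2 : R) := by
    obtain ⟨n, hn⟩ := h2
    exact ⟨n, by rw [hc.mul_pow, hn, mul_zero]⟩
  obtain ⟨u, hu⟩ := hm.isUnit_one_sub
  have e1 : (1 - x * 2) * (↑u⁻¹ : R) = 1 := by rw [← hu]; exact u.mul_inv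
  have h0 : (2:R) * (1 - x * 2) = 0 := by
    rw [mul_sub, mul_one, ← mul_assoc, ← hx, sub_self]
  calc (2:R) = 2 * ((1 - x * 2) * ↑u⁻¹) := by rw [e1, mul_one]
  _ = (2 * (1 - x * 2)) * ↑u⁻¹ := by rw [mul_assoc]
  _ = 0 := by rw [h0, zero_mul]

lemma sq_zero_eq_zero (h2 : (2:R) = 0)
    (hplus : ∀ t : R, t + t = 0)
    (hreg : ∀ a : R, ∃ x : R, a = a * x * a)
    (hUU : ∀ u : Rˣ, IsNilpotent ((u:R) - 1)) {a : R} (ha : a * a = 0) : a = 0 := by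
  obtain ⟨x, hx'⟩ := hreg a
  have hx : a * x * a = a := hx'.symm
  obtain ⟨e, he_def⟩ : ∃ e : R, e = a * x := ⟨_, rfl⟩
  have hea : e * a = a := by rw [he_def]; exact hx
  have hae : a * e = 0 := by rw [he_def, ← mul_assoc, ha, zero_mul]
  have hee : e * e = e := by
    rw [he_def]
    conv_lhs => rw [← mul_assoc]
    rw [hx]
  obtain ⟨s, hs_def⟩ : ∃ s : R, s = x * e - e * (x * e) := ⟨_, rfl⟩
  have hxee : (x * e) * e = x * e := by rw [mul_assoc, hee]
  have hse : s * e = s := by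
    rw [hs_def, sub_mul, hxee, mul_assoc e (x*e) e, hxee]
  have hes : e * s = 0 := by
    rw [hs_def, mul_sub, ← mul_assoc e e (x*e), hee, sub_self]
  have has : a * s = e := by
    have h1 : a * (x * e) = e := by rw [← mul_assoc, ← he_def, hee]
    have h1' : a * (e * (x * e)) = 0 := by rw [← mul_assoc, hae, zero_mul]
    rw [hs_def, mul_sub, h1, h1', sub_zero]
  have hss : s * s = 0 := by
    calc s * s = (s * e) * s := by rw [hse]
    _ = s * (e * s) := by rw [mul_assoc]
    _ = 0 := by rw [hes, mul_zero]
  have hqq : (s*a)*(s*a) = s*a := by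
    calc (s*a)*(s*a) = s*((a*s)*a) := by rw [mul_assoc, ← mul_assoc a s a]
    _ = s*a := by rw [has, hea]
  have hqs : (s*a)*s = s := by rw [mul_assoc, has, hse]
  have hqa : (s*a)*a = 0 := by rw [mul_assoc, ha, mul_zero]
  have heq : e*(s*a) = 0 := by rw [← mul_assoc, hes, zero_mul]
  have hqe : (s*a)*e = 0 := by rw [mul_assoc, hae, mul_zero]
  -- the unit (1+a)(1+s) and its nilpotent difference with 1
  obtain ⟨u1, hu1⟩ := unit_of_sq_zero ha
  obtain ⟨u2, hu2⟩ := unit_of_sq_zero hss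
  have hnil : IsNilpotent (a + s + e) := by
    have h5 := hUU (u1 * u2)
    rw [Units.val_mul, hu1, hu2] at h5
    have h3 : (1+a)*(1+s) - 1 = a + s + e := by
      have h4 : (1+a)*(1+s) - 1 = a + s + a*s := by noncomm_ring
      rw [h4, has]
    rwa [h3] at h5
  -- powers
  have e2 : (a+s+e)*(a+s+e) = a + s + s*a := by
    have expand : (a+s+e)*(a+s+e)
        = a*a + a*s + a*e + (s*a + s*s + s*e) + (e*a + e*s + e*e) := by noncomm_ring
    rw [expand, ha, has, hae, hss, hse, hea, hes, hee]
    have hclean : (0:R) + e + 0 + (s*a + 0 + s) + (a + 0 + e) = a + s + s*a + (e+e) := by abel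
    rw [hclean, hplus e, add_zero]
  have e3 : ((a+s+e)*(a+s+e))*(a+s+e) = e + s*a := by
    rw [e2]
    have expand2 : (a+s+s*a)*(a+s+e)
        = a*a + a*s + a*e + (s*a + s*s + s*e) + ((s*a)*a + (s*a)*s + (s*a)*e) := by noncomm_ring
    rw [expand2, ha, has, hae, hss, hse, hqa, hqs, hqe]
    have hclean : (0:R) + e + 0 + (s*a + 0 + s) + (0 + s + 0) = e + s*a + (s+s) := by abel
    rw [hclean, hplus s, add_zero]
  have hp : (e+s*a)*(e+s*a) = e+s*a := by
    have expand3 : (e+s*a)*(e+s*a) = e*e + e*(s*a) + ((s*a)*e + (s*a)*(s*a)) := by noncomm_ring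
    rw [expand3, hee, heq, hqe, hqq]
    abel
  have hp3 : (a+s+e)^3 = e + s*a := by
    rw [pow_succ, pow_two]; exact e3
  obtain ⟨k, hk⟩ := hnil
  rcases k with _ | k
  · have h1 : (1:R) = 0 := by simpa using hk
    calc a = a * 1 := (mul_one a).symm
    _ = 0 := by rw [h1, mul_zero]
  · have hpk : (e+s*a)^(k+1) = 0 := by
      rw [← hp3, ← pow_mul, mul_comm 3 (k+1), pow_mul, hk]
      simp
    have hppow : ∀ m : ℕ, (e+s*a)^(m+1) = e+s*a := by
      intro m
      induction m with
      | zero => exact pow_one _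
      | succ m ih => rw [pow_succ, ih, hp]
    have hp0 : e + s*a = 0 := by rw [← hppow k, hpk]
    have he0 : e = 0 := by
      have h6 : e*(e+s*a) = e := by rw [mul_add, hee, heq, add_zero]
      calc e = e*(e+s*a) := h6.symm
      _ = 0 := by rw [hp0, mul_zero]
    calc a = e * a := hea.symm
    _ = 0 := by rw [he0, zero_mul]

lemma nilpotent_zero (hsq : ∀ b : R, b * b = 0 → b = 0) {a : R} (h : IsNilpotent a) :
    a = 0 := by
  suffices H : ∀ n : ℕ, ∀ b : R, b ^ n = 0 → b = 0 by
    obtain ⟨n, hn⟩ := h; exact H n a hn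
  intro n
  induction n using Nat.strong_induction_on with
  | _ n ih =>
    intro b hb
    match n with
    | 0 =>
      have h1 : (1:R) = 0 := by simpa using hb
      calc b = b * 1 := (mul_one b).symm
      _ = 0 := by rw [h1, mul_zero]
    | 1 => simpa using hb
    | (m+2) =>
      have hfold : b^(m+1) * b^(m+1) = 0 := by
        rw [← pow_add, show (m+1)+(m+1) = (m+2)+m by omega, pow_add, hb, zero_mul]
      exact ih (m+1) (by omega) b (hsq _ hfold)

lemma idem_central (hsq : ∀ b : R, b * b = 0 → b = 0) {e : R} (he : e * e = e) (r : R) :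
    e * r = r * e := by
  have hee2 : ∀ X : R, e * (e * X) = e * X := fun X => by rw [← mul_assoc, he]
  have hT3 : (e*(r*e))*(e*r) = (e*r)*(e*r) := by
    calc (e*(r*e))*(e*r) = e*(r*(e*(e*r))) := by noncomm_ring
    _ = e*(r*(e*r)) := by rw [hee2]
    _ = (e*r)*(e*r) := by noncomm_ring
  have hT4 : (e*(r*e))*(e*(r*e)) = (e*r)*(e*(r*e)) := by
    calc (e*(r*e))*(e*(r*e)) = e*(r*(e*(e*(r*e)))) := by noncomm_ring
    _ = e*(r*(e*(r*e))) := by rw [hee2]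
    _ = (e*r)*(e*(r*e)) := by noncomm_ring
  have h1 : (e*r - e*(r*e)) * (e*r - e*(r*e)) = 0 := by
    have expand : (e*r - e*(r*e)) * (e*r - e*(r*e))
        = (e*r)*(e*r) - (e*r)*(e*(r*e)) - (e*(r*e))*(e*r) + (e*(r*e))*(e*(r*e)) := by
      noncomm_ring
    rw [expand, hT3, hT4]; abel
  have hS2 : (r*e)*(e*(r*e)) = (r*e)*(r*e) := by
    calc (r*e)*(e*(r*e)) = r*(e*(e*(r*e))) := by noncomm_ring
    _ = r*(e*(r*e)) := by rw [hee2]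
    _ = (r*e)*(r*e) := by noncomm_ring
  have hS4 : (e*(r*e))*(e*(r*e)) = (e*(r*e))*(r*e) := by
    calc (e*(r*e))*(e*(r*e)) = e*(r*(e*(e*(r*e)))) := by noncomm_ring
    _ = e*(r*(e*(r*e))) := by rw [hee2]
    _ = (e*(r*e))*(r*e) := by noncomm_ring
  have h3 : (r*e - e*(r*e)) * (r*e - e*(r*e)) = 0 := by
    have expand : (r*e - e*(r*e)) * (r*e - e*(r*e))
        = (r*e)*(r*e) - (r*e)*(e*(r*e)) - (e*(r*e))*(r*e) + (e*(r*e))*(e*(r*e)) := by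
      noncomm_ring
    rw [expand, hS2, hS4]; abel
  have h2' : e*r = e*(r*e) := sub_eq_zero.mp (hsq _ h1)
  have h4' : r*e = e*(r*e) := sub_eq_zero.mp (hsq _ h3)
  rw [h2', ← h4']

lemma all_idem (hreg : ∀ a : R, ∃ x : R, a = a * x * a)
    (hsq : ∀ b : R, b * b = 0 → b = 0)
    (hone : ∀ u : Rˣ, (u : R) = 1) (x : R) : x ^ 2 = x := by
  obtain ⟨y, hy'⟩ := hreg x
  have hy : x * y * x = x := hy'.symm
  obtain ⟨e, he_def⟩ : ∃ e : R, e = x * y := ⟨_, rfl⟩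
  obtain ⟨f, hf_def⟩ : ∃ f : R, f = y * x := ⟨_, rfl⟩
  have he : e * e = e := by
    rw [he_def]
    conv_lhs => rw [← mul_assoc]
    rw [hy]
  have hf : f * f = f := by
    rw [hf_def]
    conv_lhs => rw [mul_assoc, ← mul_assoc x y x]
    rw [hy]
  have hex : e * x = x := by rw [he_def]; exact hy
  have hxf : x * f = x := by rw [hf_def, ← mul_assoc, hy]
  have ecomm := idem_central hsq he
  have fcomm := idem_central hsq hf
  have hfe : f = e * f := by
    calc f = y * x := hf_def
    _ = y * (e * x) := by rw [hex]
    _ = (y * e) * x := by rw [mul_assoc]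
    _ = (e * y) * x := by rw [ecomm y]
    _ = e * (y * x) := by rw [mul_assoc]
    _ = e * f := by rw [← hf_def]
  have heef : e = e * f := by
    calc e = x * y := he_def
    _ = (x * f) * y := by rw [hxf]
    _ = x * (f * y) := by rw [mul_assoc]
    _ = x * (y * f) := by rw [fcomm y]
    _ = (x * y) * f := by rw [mul_assoc]
    _ = e * f := by rw [← he_def]
  have hef : f = e := by rw [hfe, ← heef]
  have hxye : x * (y * e) = e := by rw [← mul_assoc, ← he_def, he]
  have hxe : x * e = x := by rw [← hef, hxf]
  have heye : e * (y * e) = y * e := by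
    rw [← mul_assoc, ecomm y, mul_assoc, he]
  have hyex : (y * e) * x = e := by rw [mul_assoc, hex, ← hf_def, hef]
  have hyee : (y * e) * e = y * e := by rw [mul_assoc, he]
  have hv : IsUnit (x + (1 - e)) := by
    refine myIsUnit _ ((y*e) + (1 - e)) ?_ ?_
    · have expand : (x + (1-e))*((y*e) + (1-e))
          = x*(y*e) + (x - x*e) + ((y*e) - e*(y*e)) + (1 - e - e + e*e) := by noncomm_ring
      rw [expand, hxye, hxe, heye, he]
      abel
    · have expand : ((y*e) + (1-e))*(x + (1-e))
          = (y*e)*x + ((y*e) - (y*e)*e) + (x - e*x) + (1 - e - e + e*e) := by noncomm_ring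
      rw [expand, hyex, hyee, hex, he]
      abel
  obtain ⟨u, hu⟩ := hv
  have hv1 : x + (1 - e) = 1 := by rw [← hu]; exact hone u
  have hx_e : x = e := by
    have h7 : x = (x + (1 - e)) - (1 - e) := by abel
    rw [h7, hv1, sub_sub_cancel]
  rw [pow_two, hx_e, he]

lemma delta_zero (hreg : ∀ a : R, ∃ x : R, a = a * x * a) {r : R}
    (hr : ∀ u : Rˣ, IsUnit (r + (u : R))) : r = 0 := by
  have h1 : IsUnit (r + 1) := by simpa using hr 1
  obtain ⟨c, hc⟩ := h1
  -- r commutes with every idempotent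
  have main : ∀ g : R, g * g = g → r * g = g * r := by
    intro g hg
    have hg0 : (1 - g) * g = 0 := by rw [sub_mul, one_mul, hg, sub_self]
    have hg0' : g * (1 - g) = 0 := by rw [mul_sub, mul_one, hg, sub_self]
    have t1 : (1 - g) * ((↑c⁻¹ : R) * g) = 0 := by
      apply eq_zero_of_forall_unit hreg
      intro z
      have sqz : (g*(z*(1-g))) * (g*(z*(1-g))) = 0 := by
        calc (g*(z*(1-g))) * (g*(z*(1-g))) = g*(z*(((1-g)*g)*(z*(1-g)))) := by noncomm_ring
        _ = 0 := by rw [hg0, zero_mul, mul_zero, mul_zero]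
      have hA : IsUnit ((c:R) + g*(z*(1-g))) := by
        obtain ⟨w, hw⟩ := unit_of_sq_zero sqz
        have h6 := hr w
        rw [hw] at h6
        have harr : r + (1 + g*(z*(1-g))) = ↑c + g*(z*(1-g)) := by rw [hc]; abel
        rwa [harr] at h6
      have hB : IsUnit (1 + ((↑c⁻¹ : R) * (g*(z*(1-g))))) := by
        obtain ⟨v, hv⟩ := hA
        refine ⟨c⁻¹ * v, ?_⟩
        rw [Units.val_mul, hv, mul_add, c.inv_mul]
      have hB' : IsUnit (1 + (((↑c⁻¹ : R) * g) * z) * (1-g)) := by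
        have e5 : (1:R) + ((↑c⁻¹ : R) * (g*(z*(1-g)))) = 1 + (((↑c⁻¹ : R) * g) * z) * (1-g) := by
          noncomm_ring
        rwa [e5] at hB
      have hC := one_add_swap hB'
      have hC' : IsUnit (1 + ((1-g) * ((↑c⁻¹ : R) * g)) * z) := by
        have e6 : (1:R) + (1-g) * (((↑c⁻¹ : R) * g) * z) = 1 + ((1-g) * ((↑c⁻¹ : R) * g)) * z := by
          noncomm_ring
        rwa [e6] at hC
      exact one_add_swap hC'
    have t2 : g * ((↑c⁻¹ : R) * (1 - g)) = 0 := by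
      apply eq_zero_of_forall_unit hreg
      intro z
      have sqz : ((1-g)*(z*g)) * ((1-g)*(z*g)) = 0 := by
        calc ((1-g)*(z*g)) * ((1-g)*(z*g)) = (1-g)*(z*((g*(1-g))*(z*g))) := by noncomm_ring
        _ = 0 := by rw [hg0', zero_mul, mul_zero, mul_zero]
      have hA : IsUnit ((c:R) + (1-g)*(z*g)) := by
        obtain ⟨w, hw⟩ := unit_of_sq_zero sqz
        have h6 := hr w
        rw [hw] at h6
        have harr : r + (1 + (1-g)*(z*g)) = ↑c + (1-g)*(z*g) := by rw [hc]; abel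
        rwa [harr] at h6
      have hB : IsUnit (1 + ((↑c⁻¹ : R) * ((1-g)*(z*g)))) := by
        obtain ⟨v, hv⟩ := hA
        refine ⟨c⁻¹ * v, ?_⟩
        rw [Units.val_mul, hv, mul_add, c.inv_mul]
      have hB' : IsUnit (1 + (((↑c⁻¹ : R) * (1-g)) * z) * g) := by
        have e5 : (1:R) + ((↑c⁻¹ : R) * ((1-g)*(z*g))) = 1 + (((↑c⁻¹ : R) * (1-g)) * z) * g := by
          noncomm_ring
        rwa [e5] at hB
      have hC := one_add_swap hB'
      have hC' : IsUnit (1 + (g * ((↑c⁻¹ : R) * (1-g))) * z) := by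
        have e6 : (1:R) + g * (((↑c⁻¹ : R) * (1-g)) * z) = 1 + (g * ((↑c⁻¹ : R) * (1-g))) * z := by
          noncomm_ring
        rwa [e6] at hC
      exact one_add_swap hC'
    have hdg : (↑c⁻¹ : R) * g = g * (↑c⁻¹ : R) := by
      rw [sub_mul, one_mul, sub_eq_zero] at t1
      rw [mul_sub, mul_one, mul_sub, sub_eq_zero] at t2
      rw [t1, ← t2]
    have hcg : (↑c : R) * g = g * ↑c := by
      calc (↑c : R) * g = ↑c * g * (↑c⁻¹ * ↑c) := by rw [c.inv_mul, mul_one]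
      _ = ↑c * (g * ↑c⁻¹) * ↑c := by noncomm_ring
      _ = ↑c * (↑c⁻¹ * g) * ↑c := by rw [← hdg]
      _ = (↑c * ↑c⁻¹) * (g * ↑c) := by noncomm_ring
      _ = g * ↑c := by rw [c.mul_inv, one_mul]
    have hr' : r = (↑c : R) - 1 := by rw [hc]; abel
    rw [hr', sub_mul, mul_sub, one_mul, mul_one, hcg]
  -- apply to the idempotents x*r and r*x
  obtain ⟨x, hx'⟩ := hreg r
  have hx : r * x * r = r := hx'.symm
  have hg1 : (x*r)*(x*r) = x*r := by
    calc (x*r)*(x*r) = x*((r*x)*r) := by noncomm_ring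
    _ = x*r := by rw [hx]
  have hg2 : (r*x)*(r*x) = r*x := by
    calc (r*x)*(r*x) = (r*x*r)*x := by noncomm_ring
    _ = r*x := by rw [hx]
  have hA1 : (x*r)*r = r := by
    calc (x*r)*r = r*(x*r) := (main _ hg1).symm
    _ = (r*x)*r := by noncomm_ring
    _ = r := hx
  have hA2 : r*(r*x) = r := by
    calc r*(r*x) = (r*x)*r := main _ hg2
    _ = r := hx
  have hrxxr : x*r = r*x := by
    calc x*r = x*(r*(r*x)) := by rw [hA2]
    _ = ((x*r)*r)*x := by noncomm_ring
    _ = r*x := by rw [hA1]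
  obtain ⟨e, he_def⟩ : ∃ e : R, e = r * x := ⟨_, rfl⟩
  have he : e * e = e := by rw [he_def]; exact hg2
  have her : e * r = r := by rw [he_def]; exact hx
  have hre : r * e = r := by rw [he_def]; exact hA2
  have hxr_e : x * r = e := by rw [he_def]; exact hrxxr
  have hrx' : r * (e*(x*e)) = e := by
    calc r * (e*(x*e)) = (r*e)*(x*e) := by noncomm_ring
    _ = (r*x)*e := by rw [hre, ← mul_assoc]
    _ = e*e := by rw [← he_def]
    _ = e := he
  have hx'r : (e*(x*e))*r = e := by
    calc (e*(x*e))*r = e*(x*(e*r)) := by noncomm_ring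
    _ = e*(x*r) := by rw [her]
    _ = e*e := by rw [hxr_e]
    _ = e := he
  have h8 : e*(e*(x*e)) = e*(x*e) := by rw [← mul_assoc, he]
  have h9 : (e*(x*e))*e = e*(x*e) := by rw [mul_assoc, mul_assoc x e e, he]
  have hv : IsUnit (r + (1 - e)) := by
    refine myIsUnit _ ((e*(x*e)) + (1 - e)) ?_ ?_
    · have expand : (r + (1-e))*((e*(x*e)) + (1-e))
          = r*(e*(x*e)) + (r - r*e) + ((e*(x*e)) - e*(e*(x*e))) + (1 - e - e + e*e) := by
        noncomm_ring
      rw [expand, hrx', hre, h8, he]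
      abel
    · have expand : ((e*(x*e)) + (1-e))*(r + (1-e))
          = (e*(x*e))*r + ((e*(x*e)) - (e*(x*e))*e) + (r - e*r) + (1 - e - e + e*e) := by
        noncomm_ring
      rw [expand, hx'r, h9, her, he]
      abel
  obtain ⟨v, hv'⟩ := hv
  have hminus := hr (-v)
  have harr2 : r + ↑(-v) = e - 1 := by rw [Units.val_neg, hv']; abel
  rw [harr2] at hminus
  obtain ⟨k, hk⟩ := hminus
  have h10 : (e-1)*e = 0 := by rw [sub_mul, one_mul, he, sub_self]
  have he0 : e = 0 := by
    calc e = (↑k⁻¹ * ↑k) * e := by rw [k.inv_mul, one_mul]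
    _ = ↑k⁻¹ * ((e-1) * e) := by rw [mul_assoc, hk]
    _ = 0 := by rw [h10, mul_zero]
  calc r = r*e := hre.symm
  _ = 0 := by rw [he0, mul_zero]

end Helpers

theorem deltaU_tfae_of_regular (R : Type*) [Ring R]
    (hreg : ∀ a : R, ∃ x : R, a = a * x * a) :
    List.TFAE
      [IsDeltaU R,
       ∀ u : Rˣ, (u : R) - 1 ∈ Ideal.jacobson (⊥ : Ideal R),
       ∀ u : Rˣ, IsNilpotent ((u : R) - 1),
       ∀ x : R, x ^ 2 = x] := by
  tfae_have 1 → 2 := by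
    intro h u
    have h0 := delta_zero hreg (h u)
    rw [h0]
    exact Submodule.zero_mem _
  tfae_have 2 → 3 := by
    intro h u
    have h0 := jac_bot_zero hreg (h u)
    rw [h0]
    exact ⟨1, by simp⟩
  tfae_have 3 → 4 := by
    intro h
    have h2n : IsNilpotent (2:R) := by
      have h5 := h (-1)
      have e : ((-1 : Rˣ) : R) - 1 = -2 := by
        rw [Units.val_neg, Units.val_one]
        norm_num
      rw [e] at h5
      simpa using h5.neg
    have h2 : (2:R) = 0 := two_zero hreg h2n
    have hplus := hplus_of_two h2
    have hsq : ∀ b : R, b * b = 0 → b = 0 := fun b hb =>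
      sq_zero_eq_zero h2 hplus hreg h hb
    have hone : ∀ u : Rˣ, (u : R) = 1 := by
      intro u
      have h6 := nilpotent_zero hsq (h u)
      rwa [sub_eq_zero] at h6
    exact all_idem hreg hsq hone
  tfae_have 4 → 1 := by
    intro h u
    have hu1 : (u : R) = 1 := by
      have h4 := h (u : R)
      rw [pow_two] at h4
      calc (u:R) = (↑u * ↑u) * ↑u⁻¹ := by rw [mul_assoc, u.mul_inv, mul_one]
      _ = ↑u * ↑u⁻¹ := by rw [h4]
      _ = 1 := u.mul_inv
    simp only [Delta, Set.mem_setOf_eq]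
    intro w
    rw [hu1, sub_self, zero_add]
    exact w.isUnit
  tfae_finish
end

section
/- For a ring R the following are equivalent: (i) R is a potent ΔU ring; (ii) R is a J-clean ring, i.e., every element a ∈ R can be written as a = e + j with e an idempotent and j ∈ J(R). -/
/-- `R` is semi-potent: every element outside `J(R)` has a nonzero idempotent in `aR`. -/
def IsSemipotent (R : Type*) [Ring R] : Prop :=
  ∀ a : R, a ∉ Ideal.jacobson (⊥ : Ideal R) →
    ∃ e : R, e ≠ 0 ∧ e * e = e ∧ ∃ r : R, e = a * r

/-- Idempotents lift modulo `J(R)`. -/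
def IdempotentsLiftModJ (R : Type*) [Ring R] : Prop :=
  ∀ a : R, a - a ^ 2 ∈ Ideal.jacobson (⊥ : Ideal R) →
    ∃ e : R, e * e = e ∧ a - e ∈ Ideal.jacobson (⊥ : Ideal R)

section Aux
variable {R : Type*} [Ring R]

private lemma jac_left_inv {j : R} (hj : j ∈ Ideal.jacobson (⊥ : Ideal R)) :
    ∃ z : R, z * (1 + j) = 1 := by
  obtain ⟨z, hz⟩ := Ideal.mem_jacobson_iff.1 hj 1
  rw [Ideal.mem_bot, sub_eq_zero, mul_one] at hz
  exact ⟨z, by rw [mul_add, mul_one, add_comm, hz]⟩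

private lemma jac_one_add_unit {j : R} (hj : j ∈ Ideal.jacobson (⊥ : Ideal R)) :
    IsUnit ((1 : R) + j) := by
  obtain ⟨z, hz⟩ := jac_left_inv hj
  have hzj : -(z * j) ∈ Ideal.jacobson (⊥ : Ideal R) :=
    neg_mem (Ideal.mul_mem_left _ z hj)
  obtain ⟨w, hw⟩ := jac_left_inv hzj
  have hz0 : z + z * j = 1 := by rw [← hz, mul_add, mul_one]
  have hz' : z = 1 + -(z * j) := by rw [← hz0]; abel
  have hwz : w * z = 1 := by rw [hz']; exact hw
  have h1j : (1 + j) = w := by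
    calc (1 + j) = (w * z) * (1 + j) := by rw [hwz, one_mul]
    _ = w * (z * (1 + j)) := by rw [mul_assoc]
    _ = w := by rw [hz, mul_one]
  refine ⟨⟨1 + j, z, ?_, hz⟩, rfl⟩
  rw [h1j]; exact hwz

private lemma jac_add_unit {j : R} (hj : j ∈ Ideal.jacobson (⊥ : Ideal R)) (v : Rˣ) :
    IsUnit ((v : R) + j) := by
  have h : IsUnit ((1 : R) + (v⁻¹ : Rˣ) * j) :=
    jac_one_add_unit (Ideal.mul_mem_left _ _ hj)
  have := (v.isUnit).mul h
  rwa [mul_add, mul_one, ← mul_assoc, v.mul_inv, one_mul] at this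

private lemma delta_add_s3 {r s : R} (hr : r ∈ Delta R) (hs : s ∈ Delta R) :
    r + s ∈ Delta R := by
  intro u
  obtain ⟨v, hv⟩ := hs u
  have := hr v
  rw [hv, ← add_assoc] at this
  exact this

private lemma delta_neg_s3 {r : R} (hr : r ∈ Delta R) : -r ∈ Delta R := by
  intro u
  have := (hr (-u)).neg
  have h : -(r + ((-u : Rˣ) : R)) = -r + (u : R) := by
    rw [Units.val_neg]; abel
  rwa [h] at this

private lemma delta_mul_unit {r : R} (hr : r ∈ Delta R) (u : Rˣ) :
    r * (u : R) ∈ Delta R := by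
  intro v
  have h := (hr (v * u⁻¹)).mul u.isUnit
  have he : (r + ((v * u⁻¹ : Rˣ) : R)) * (u : R) = r * u + (v : R) := by
    rw [Units.val_mul, add_mul, mul_assoc, u.inv_mul, mul_one]
  rwa [he] at h

private lemma delta_mul_delta {r s : R} (hr : r ∈ Delta R) (hs : s ∈ Delta R) :
    r * s ∈ Delta R := by
  obtain ⟨v, hv⟩ := hs 1
  have h2 : r * (v : R) + -r ∈ Delta R := delta_add_s3 (delta_mul_unit hr v) (delta_neg_s3 hr)
  have he : r * (v : R) + -r = r * s := by
    rw [hv, Units.val_one, mul_add, mul_one]; abel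
  rwa [he] at h2

private lemma sq_zero_mem_delta (hdu : IsDeltaU R) {x : R} (hx : x * x = 0) :
    x ∈ Delta R := by
  have hu : (1 + x) * (1 - x) = 1 := by
    have h : (1 + x) * (1 - x) = 1 - x * x := by noncomm_ring
    rw [h, hx, sub_zero]
  have hu' : (1 - x) * (1 + x) = 1 := by
    have h : (1 - x) * (1 + x) = 1 - x * x := by noncomm_ring
    rw [h, hx, sub_zero]
  have := hdu ⟨1 + x, 1 - x, hu, hu'⟩
  simpa using this

private lemma delta_idem_eq_zero {e : R} (he : e * e = e) (hd : e ∈ Delta R) :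
    e = 0 := by
  obtain ⟨w, hw⟩ := hd (-1)
  have hw' : (w : R) = e - 1 := by rw [hw, Units.val_neg, Units.val_one]; abel
  have h2 : (w : R) * w = -(w : R) := by
    rw [hw']
    have h : (e - 1) * (e - 1) = e * e - e - e + 1 := by noncomm_ring
    rw [h, he]; abel
  have h3 : (w : R) = -1 := by
    have := congrArg (fun t => ((w⁻¹ : Rˣ) : R) * t) h2
    simpa [← mul_assoc, w.inv_mul] using this
  have h4 : e - 1 = -1 := by rw [← hw', h3]
  have := congrArg (fun t => t + (1 : R)) h4
  simpa using this

private lemma dedekind_finite (hdu : IsDeltaU R) {a b : R} (hab : a * b = 1) :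
    b * a = 1 := by
  have hap : a * (1 - b * a) = 0 := by
    rw [mul_sub, mul_one, ← mul_assoc, hab, one_mul, sub_self]
  have hpb : (1 - b * a) * b = 0 := by
    rw [sub_mul, one_mul, mul_assoc, hab, mul_one, sub_self]
  have hpp : (1 - b * a) * (1 - b * a) = 1 - b * a := by
    have h : (1 - b * a) * (1 - b * a) = (1 - b * a) - b * (a * (1 - b * a)) := by noncomm_ring
    rw [h, hap, mul_zero, sub_zero]
  have hx2 : ((1 - b * a) * a) * ((1 - b * a) * a) = 0 := by
    have h : ((1 - b * a) * a) * ((1 - b * a) * a) = (1 - b * a) * (a * (1 - b * a)) * a := by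
      noncomm_ring
    rw [h, hap, mul_zero, zero_mul]
  have hy2 : (b * (1 - b * a)) * (b * (1 - b * a)) = 0 := by
    have h : (b * (1 - b * a)) * (b * (1 - b * a)) = b * ((1 - b * a) * b) * (1 - b * a) := by
      noncomm_ring
    rw [h, hpb, mul_zero, zero_mul]
  have hxy : ((1 - b * a) * a) * (b * (1 - b * a)) = 1 - b * a := by
    have h : ((1 - b * a) * a) * (b * (1 - b * a)) = (1 - b * a) * ((a * b) * (1 - b * a)) := by
      noncomm_ring
    rw [h, hab, one_mul, hpp]
  have hpd : (1 - b * a) ∈ Delta R := by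
    have := delta_mul_delta (sq_zero_mem_delta hdu hx2) (sq_zero_mem_delta hdu hy2)
    rwa [hxy] at this
  have hp0 : (1 - b * a) = 0 := delta_idem_eq_zero hpp hpd
  exact (sub_eq_zero.mp hp0).symm

private lemma offdiag_right (hdu : IsDeltaU R) {e : R} (he : e * e = e) (x : R) :
    e * x * (1 - e) ∈ Delta R := by
  apply sq_zero_mem_delta hdu
  have h0 : (1 - e) * e = 0 := by rw [sub_mul, one_mul, he, sub_self]
  have h : (e * x * (1 - e)) * (e * x * (1 - e)) = e * x * ((1 - e) * e) * (x * (1 - e)) := by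
    noncomm_ring
  rw [h, h0, mul_zero, zero_mul]

private lemma offdiag_left (hdu : IsDeltaU R) {e : R} (he : e * e = e) (x : R) :
    (1 - e) * x * e ∈ Delta R := by
  apply sq_zero_mem_delta hdu
  have h0 : e * (1 - e) = 0 := by rw [mul_sub, mul_one, he, sub_self]
  have h : ((1 - e) * x * e) * ((1 - e) * x * e) = (1 - e) * x * (e * (1 - e)) * (x * e) := by
    noncomm_ring
  rw [h, h0, mul_zero, zero_mul]

private lemma corner_inv {e : R} (he : e * e = e) {x : R} (hex : e * x = x) (hxe : x * e = x)
    (hu : IsUnit (x + (1 - e))) :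
    ∃ y : R, e * y = y ∧ y * e = y ∧ x * y = e ∧ y * x = e := by
  obtain ⟨u, hu⟩ := hu
  have hm1 : (x + (1 - e)) * ((u⁻¹ : Rˣ) : R) = 1 := by rw [← hu, u.mul_inv]
  have hm2 : ((u⁻¹ : Rˣ) : R) * (x + (1 - e)) = 1 := by rw [← hu, u.inv_mul]
  set m : R := ((u⁻¹ : Rˣ) : R) with hm
  have hxm : x * m = e := by
    have h1 : e * ((x + (1 - e)) * m) = e := by rw [hm1, mul_one]
    have h2 : e * ((x + (1 - e)) * m) = (e * x) * m + (e - e * e) * m := by noncomm_ring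
    rw [h2, he, sub_self, zero_mul, add_zero, hex] at h1
    exact h1
  have hmx : m * x = e := by
    have h1 : (m * (x + (1 - e))) * e = e := by rw [hm2, one_mul]
    have h2 : (m * (x + (1 - e))) * e = m * (x * e) + m * (e - e * e) := by noncomm_ring
    rw [h2, he, sub_self, mul_zero, add_zero, hxe] at h1
    exact h1
  refine ⟨e * m * e, ?_, ?_, ?_, ?_⟩
  · have h : e * (e * m * e) = (e * e) * m * e := by noncomm_ring
    rw [h, he]
  · have h : (e * m * e) * e = e * m * (e * e) := by noncomm_ring
    rw [h, he]
  · have h : x * (e * m * e) = (x * e) * m * e := by noncomm_ring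
    rw [h, hxe, hxm, he]
  · have h : (e * m * e) * x = e * m * (e * x) := by noncomm_ring
    rw [h, hex, mul_assoc, hmx, he]

private lemma rinv_delta (hdu : IsDeltaU R) {e x y : R} (he : e * e = e)
    (hxe : x * e = x) (hey : e * y = y) (hxy : x * y = e) : x - e ∈ Delta R := by
  have h1 : (x + (1 - e)) * (y + (1 - e)) = 1 := by
    have h : (x + (1 - e)) * (y + (1 - e)) =
        x * y + (x - x * e) + (y - e * y) + (1 - e - e + e * e) := by noncomm_ring
    rw [h, hxe, sub_self, hey, sub_self, he, hxy]
    abel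
  have h2 := dedekind_finite hdu h1
  have := hdu ⟨x + (1 - e), y + (1 - e), h1, h2⟩
  have he' : (x + (1 - e)) - 1 = x - e := by abel
  simp only [Units.val_mk] at this
  rwa [he'] at this

private lemma boolean_mod_jac (hsp : IsSemipotent R) (hdu : IsDeltaU R) (a : R) :
    a - a ^ 2 ∈ Ideal.jacobson (⊥ : Ideal R) := by
  by_contra h
  obtain ⟨e, he0, hee, c, hc⟩ := hsp _ h
  -- hc : e = (a - a^2) * c
  have hbc : (a - a * a) * c = e := by rw [← pow_two]; exact hc.symm
  have hE : ∀ x : R, e * (e * x) = e * x := fun x => by rw [← mul_assoc, hee]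
  -- the central identity
  have key : (e*a*e - (e*a*e)*(e*a*e)) * (e*c*e)
      = e*((a - a*a)*c)*e - (e*(a - a*a)*(1-e)) * ((1-e)*c*e)
        + (e*a*(1-e)) * ((1-e)*(a*(e*c))*e) := by
    simp only [mul_sub, sub_mul, mul_add, add_mul, mul_one, one_mul, mul_assoc, hee, hE]
    abel
  have hCe : e*((a - a*a)*c)*e = e := by rw [hbc, hee, hee]
  rw [hCe] at key
  have hδ : (e*a*e - (e*a*e)*(e*a*e)) * (e*c*e) - e ∈ Delta R := by
    have h1 := delta_mul_delta (offdiag_right hdu hee a) (offdiag_left hdu hee (a*(e*c)))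
    have h2 := delta_mul_delta (offdiag_right hdu hee (a - a*a)) (offdiag_left hdu hee c)
    have h3 := delta_add_s3 (delta_neg_s3 h2) h1
    rw [key, show e - (e*(a - a*a)*(1-e)) * ((1-e)*c*e) + (e*a*(1-e)) * ((1-e)*(a*(e*c))*e) - e
        = -((e*(a - a*a)*(1-e)) * ((1-e)*c*e)) + (e*a*(1-e)) * ((1-e)*(a*(e*c))*e) from by abel]
    exact h3
  have hzu : IsUnit ((e*a*e - (e*a*e)*(e*a*e)) * (e*c*e) + (1 - e)) := by
    have h1 := hδ 1
    rw [Units.val_one] at h1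
    rwa [show (e*a*e - (e*a*e)*(e*a*e)) * (e*c*e) - e + 1
        = (e*a*e - (e*a*e)*(e*a*e)) * (e*c*e) + (1 - e) from by abel] at h1
  have hez : e * ((e*a*e - (e*a*e)*(e*a*e)) * (e*c*e)) = (e*a*e - (e*a*e)*(e*a*e)) * (e*c*e) := by
    simp only [mul_sub, sub_mul, mul_add, add_mul, mul_one, one_mul, mul_assoc, hee, hE]
  have hze : ((e*a*e - (e*a*e)*(e*a*e)) * (e*c*e)) * e = (e*a*e - (e*a*e)*(e*a*e)) * (e*c*e) := by
    simp only [mul_sub, sub_mul, mul_add, add_mul, mul_one, one_mul, mul_assoc, hee, hE]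
  obtain ⟨y, hey, hye, hzy, hyz⟩ := corner_inv hee hez hze hzu
  -- α = e*a*e is right invertible in the corner
  have hαe : (e*a*e)*e = e*a*e := by
    have h : (e*a*e)*e = e*a*(e*e) := by noncomm_ring
    rw [h, hee]
  have hw1 : e * ((e - e*a*e) * ((e*c*e) * y)) = (e - e*a*e) * ((e*c*e) * y) := by
    have h : e * ((e - e*a*e) * ((e*c*e) * y)) = (e*e - (e*e)*a*e) * ((e*c*e) * y) := by
      noncomm_ring
    rw [h, hee]
  have h7 : (e*a*e) * ((e - e*a*e) * ((e*c*e) * y)) = e := by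
    have h : (e*a*e) * ((e - e*a*e) * ((e*c*e) * y))
        = ((e*a*(e*e) - (e*a*e)*(e*a*e)) * (e*c*e)) * y := by noncomm_ring
    rw [h, hee]; exact hzy
  have h8 := rinv_delta hdu hee hαe hw1 h7
  have hxe2 : (e - e*a*e)*e = e - e*a*e := by
    have h : (e - e*a*e)*e = e*e - e*a*(e*e) := by noncomm_ring
    rw [h, hee]
  have hw2 : e * ((e*a*e) * ((e*c*e) * y)) = (e*a*e) * ((e*c*e) * y) := by
    have h : e * ((e*a*e) * ((e*c*e) * y)) = ((e*e)*a*e) * ((e*c*e) * y) := by noncomm_ring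
    rw [h, hee]
  have h9 : (e - e*a*e) * ((e*a*e) * ((e*c*e) * y)) = e := by
    have h : (e - e*a*e) * ((e*a*e) * ((e*c*e) * y))
        = (((e*e)*a*e - (e*a*e)*(e*a*e)) * (e*c*e)) * y := by noncomm_ring
    rw [h, hee]; exact hzy
  have h10 := rinv_delta hdu hee hxe2 hw2 h9
  have h11 : -e ∈ Delta R := by
    have h12 := delta_add_s3 h8 h10
    rwa [show (e*a*e - e) + ((e - e*a*e) - e) = -e from by abel] at h12
  have h13 : e ∈ Delta R := by
    have := delta_neg_s3 h11
    rwa [neg_neg] at this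
  exact he0 (delta_idem_eq_zero hee h13)

end Aux

theorem potent_deltaU_iff_JClean (R : Type*) [Ring R] :
    (IsSemipotent R ∧ IdempotentsLiftModJ R ∧ IsDeltaU R) ↔
      (∀ a : R, ∃ e j : R, e * e = e ∧ j ∈ Ideal.jacobson (⊥ : Ideal R) ∧ a = e + j) := by
  constructor
  · rintro ⟨hsp, hlift, hdu⟩
    intro a
    obtain ⟨e, hee, hej⟩ := hlift a (boolean_mod_jac hsp hdu a)
    exact ⟨e, a - e, hee, hej, by abel⟩
  · rintro hJC
    refine ⟨?_, ?_, ?_⟩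
    · -- semipotent
      intro a ha
      obtain ⟨e, j, hee, hj, haej⟩ := hJC a
      have he0 : e ≠ 0 := by
        intro h0
        rw [h0, zero_add] at haej
        exact ha (haej ▸ hj)
      obtain ⟨v, hv⟩ := jac_one_add_unit hj
      have hea : e * a * ((v⁻¹ : Rˣ) : R) = e := by
        have h1 : e * a = e * (1 + j) := by
          rw [haej, mul_add, mul_add, mul_one, hee]
        rw [h1, ← hv, mul_assoc, v.mul_inv, mul_one]
      have he : e * (a * (((v⁻¹ : Rˣ) : R) * e)) = e := by
        have h : e * (a * (((v⁻¹ : Rˣ) : R) * e)) = (e * a * ((v⁻¹ : Rˣ) : R)) * e := by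
          noncomm_ring
        rw [h, hea, hee]
      refine ⟨a * (((v⁻¹ : Rˣ) : R) * e), ?_, ?_, _, rfl⟩
      · intro h0
        rw [h0, mul_zero] at he
        exact he0 he.symm
      · have h : (a * (((v⁻¹ : Rˣ) : R) * e)) * (a * (((v⁻¹ : Rˣ) : R) * e)) =
            a * (((v⁻¹ : Rˣ) : R) * (e * (a * (((v⁻¹ : Rˣ) : R) * e)))) := by noncomm_ring
        rw [h, he]
    · -- idempotents lift
      intro a _
      obtain ⟨e, j, hee, hj, haej⟩ := hJC a
      exact ⟨e, hee, by rw [haej]; simpa using hj⟩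
    · -- DeltaU
      intro u
      obtain ⟨e, j, hee, hj, haej⟩ := hJC (u : R)
      have hue : IsUnit e := by
        have h1 : -((u⁻¹ : Rˣ) : R) * j ∈ Ideal.jacobson (⊥ : Ideal R) :=
          Ideal.mul_mem_left _ _ hj
        have h2 : IsUnit ((1 : R) + -((u⁻¹ : Rˣ) : R) * j) := jac_one_add_unit h1
        have h3 := (u.isUnit).mul h2
        have h4 : (u : R) * ((1 : R) + -((u⁻¹ : Rˣ) : R) * j) = e := by
          rw [mul_add, mul_one, neg_mul, mul_neg, ← mul_assoc, u.mul_inv, one_mul, haej]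
          abel
        rwa [h4] at h3
      have he1 : e = 1 := by
        obtain ⟨w, hw⟩ := hue
        have h2 : (w : R) * w = w := by rw [hw]; exact hee
        have h3 := congrArg (fun t => t * ((w⁻¹ : Rˣ) : R)) h2
        simp only [mul_assoc, w.mul_inv, mul_one] at h3
        rw [← hw, h3]
      have hju : (u : R) - 1 = j := by rw [haej, he1]; abel
      rw [hju]
      intro v
      have := jac_add_unit hj v
      rwa [add_comm] at this
end

section
/- Let R be a ΔU ring and let a, b ∈ R. Then 1 - a·b ∈ Δ(R) if and only if 1 - b·a ∈ Δ(R). -/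
/-- In a ΔU ring, `x ∈ Δ(R)` iff `1 - x` is a unit. -/
lemma mem_delta_iff_aux {R : Type*} [Ring R] (hR : IsDeltaU R) (x : R) :
    x ∈ Delta R ↔ IsUnit (1 - x) := by
  constructor
  · intro hx
    have h := (hx (-1)).neg
    have : -(x + ((-1 : Rˣ) : R)) = 1 - x := by
      simp; abel
    rwa [this] at h
  · rintro ⟨u, hu⟩
    have hmem : (u : R) - 1 ∈ Delta R := hR u
    intro v
    have h := (hmem (-v)).neg
    have : -(((u : R) - 1) + ((-v : Rˣ) : R)) = x + (v : R) := by
      rw [hu]; simp only [Units.val_neg]; abel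
    rwa [this] at h

/-- ΔU rings are Dedekind-finite. -/
lemma deltaU_dedekindFinite {R : Type*} [Ring R] (hR : IsDeltaU R) {a b : R}
    (hab : a * b = 1) : b * a = 1 := by
  set x : R := 1 - b * a with hx
  have hax : a * x = 0 := by
    rw [hx, mul_sub, mul_one, ← mul_assoc, hab, one_mul, sub_self]
  have hxb : x * b = 0 := by
    rw [hx, sub_mul, one_mul, mul_assoc, hab, mul_one, sub_self]
  have hxx : x * x = x := by
    nth_rewrite 1 [hx]
    rw [sub_mul, one_mul, mul_assoc, hax, mul_zero, sub_zero]
  set p : R := x * a with hp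
  set q : R := b * x with hq
  have hpp : p * p = 0 := by
    rw [hp, mul_assoc, ← mul_assoc a x a, hax, zero_mul, mul_zero]
  have hqq : q * q = 0 := by
    rw [hq, mul_assoc, ← mul_assoc x b x, hxb, zero_mul, mul_zero]
  have hpq : p * q = x := by
    rw [hp, hq, mul_assoc, ← mul_assoc a b x, hab, one_mul, hxx]
  -- 1 + p and 1 + q are units
  have hup : IsUnit (1 + p) := by
    refine ⟨⟨1 + p, 1 - p, ?_, ?_⟩, rfl⟩
    · have : (1 + p) * (1 - p) = 1 - p * p := by noncomm_ring
      rw [this, hpp, sub_zero]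
    · have : (1 - p) * (1 + p) = 1 - p * p := by noncomm_ring
      rw [this, hpp, sub_zero]
  have huq : IsUnit (1 + q) := by
    refine ⟨⟨1 + q, 1 - q, ?_, ?_⟩, rfl⟩
    · have : (1 + q) * (1 - q) = 1 - q * q := by noncomm_ring
      rw [this, hqq, sub_zero]
    · have : (1 - q) * (1 + q) = 1 - q * q := by noncomm_ring
      rw [this, hqq, sub_zero]
  obtain ⟨u₁, hu₁⟩ := hup
  obtain ⟨u₂, hu₂⟩ := huq
  have hpD : p ∈ Delta R := by
    have := hR u₁
    rwa [hu₁, add_sub_cancel_left] at this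
  set s : R := p + q with hs
  have hws : IsUnit (1 + s) := by
    have := hpD u₂
    rw [hu₂] at this
    have e : p + (1 + q) = 1 + s := by rw [hs]; abel
    rwa [e] at this
  obtain ⟨w, hw⟩ := hws
  -- (1+s)(1 - s + s*s) = 1 + s*s*s = 1 + s, so cancel to get s*s = s
  have hs3 : s * (s * s) = s := by
    have hss : s * s = p * q + q * p := by
      rw [hs]; rw [add_mul, mul_add, mul_add, hpp, hqq]; abel
    rw [hss, hs, add_mul, mul_add, mul_add]
    have e1 : p * (p * q) = 0 := by rw [← mul_assoc, hpp, zero_mul]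
    have e2 : p * (q * p) = p := by
      rw [← mul_assoc, hpq, hp, ← mul_assoc, hxx]
    have e3 : q * (p * q) = q := by rw [hpq, hq, mul_assoc, hxx]
    have e4 : q * (q * p) = 0 := by rw [← mul_assoc, hqq, zero_mul]
    rw [e1, e2, e3, e4]; abel
  have key : (1 + s) * (1 - s + s * s) = 1 + s := by
    have : (1 + s) * (1 - s + s * s) = 1 + s * (s * s) := by noncomm_ring
    rw [this, hs3]
  have h1 : 1 - s + s * s = 1 := by
    have h : (w : R) * (1 - s + s * s) = (w : R) * 1 := by
      rw [hw, key, mul_one]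
    exact (Units.mul_right_inj w).mp h
  have hsss : s * s = s := by
    have e : s * s - s = (1 - s + s * s) - 1 := by abel
    rw [h1, sub_self] at e
    exact sub_eq_zero.mp e
  -- multiply by x on the left: x = x * a
  have hxp : x * p = p := by rw [hp, ← mul_assoc, hxx]
  have hxq : x * q = 0 := by rw [hq, ← mul_assoc, hxb, zero_mul]
  have hxs : x * s = p := by rw [hs, mul_add, hxp, hxq, add_zero]
  have hps : p * s = x := by
    rw [hs, mul_add, hpp, hpq, zero_add]
  have hxax : x * a = x := by
    have e : x * (s * s) = x * s := by rw [hsss]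
    rw [← mul_assoc, hxs, hps] at e
    rw [hp] at e
    exact e.symm
  have hx0 : x = 0 := by
    have : x * (a * b) = x := by rw [hab, mul_one]
    rw [← mul_assoc, hxax, hxb] at this
    exact this.symm
  have := sub_eq_zero.mp (hx.symm ▸ hx0 : (1 : R) - b * a = 0)
  exact this.symm

lemma deltaU_jacobson_dir {R : Type*} [Ring R] (hR : IsDeltaU R) (a b : R)
    (h : 1 - a * b ∈ Delta R) : 1 - b * a ∈ Delta R := by
  rw [mem_delta_iff_aux hR] at h ⊢
  rw [sub_sub_cancel] at h ⊢
  obtain ⟨u, hu⟩ := h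
  have h1 : a * (b * ((u⁻¹ : Rˣ) : R)) = 1 := by
    rw [← mul_assoc, ← hu, Units.mul_inv]
  have h2 : (b * ((u⁻¹ : Rˣ) : R)) * a = 1 := deltaU_dedekindFinite hR h1
  have ha : IsUnit a := ⟨⟨a, b * ((u⁻¹ : Rˣ) : R), h1, h2⟩, rfl⟩
  have hb : IsUnit b := by
    obtain ⟨A, hA⟩ := ha
    refine ⟨A⁻¹ * u, ?_⟩
    have : (A : R) * b = (u : R) := by rw [hA, hu]
    rw [Units.val_mul, ← this, ← mul_assoc, Units.inv_mul, one_mul]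
  exact hb.mul ha

theorem deltaU_jacobson_lemma (R : Type*) [Ring R] (hR : IsDeltaU R) (a b : R) :
    1 - a * b ∈ Delta R ↔ 1 - b * a ∈ Delta R := by
  exact ⟨deltaU_jacobson_dir hR a b, deltaU_jacobson_dir hR b a⟩
end

section
/- Let (R_i)_{i ∈ I} be a family of rings. The direct product ∏_{i ∈ I} R_i is a 2-ΔU ring if and only if each R_i is a 2-ΔU ring. -/
/-- A ring `R` is a 2-ΔU ring if every unit `u` satisfies `u ^ 2 - 1 ∈ Δ(R)`. -/
def Is2DeltaU (R : Type*) [Ring R] : Prop := ∀ u : Rˣ, (u : R) ^ 2 - 1 ∈ Delta R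

/-- Build a unit of a product from a family of units. -/
def piUnit {I : Type*} (R : I → Type*) [∀ i, Monoid (R i)] (u : ∀ i, (R i)ˣ) :
    (∀ i, R i)ˣ :=
  ⟨fun i => (u i : R i), fun i => ((u i)⁻¹ : (R i)ˣ),
    funext fun i => by simp, funext fun i => by simp⟩

theorem pi_is2DeltaU_iff {I : Type*} (R : I → Type*) [∀ i, Ring (R i)] :
    Is2DeltaU (∀ i, R i) ↔ ∀ i, Is2DeltaU (R i) := by
  constructor
  · intro h i u v
    classical
    set U : (∀ j, R j)ˣ := piUnit R (Function.update (fun _ => 1) i u)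
    set V : (∀ j, R j)ˣ := piUnit R (Function.update (fun _ => 1) i v)
    have h2 := (h U V).map (Pi.evalRingHom R i)
    simpa [U, V, piUnit] using h2
  · intro h u v
    set a : ∀ i, R i := (u : ∀ i, R i) ^ 2 - 1 + (v : ∀ i, R i) with ha
    have hx : ∀ i, IsUnit (a i) := fun i => by
      simpa [ha] using h i (Units.map (Pi.evalRingHom R i).toMonoidHom u)
        (Units.map (Pi.evalRingHom R i).toMonoidHom v)
    exact ⟨⟨a, fun i => (((hx i).unit)⁻¹ : (R i)ˣ),
      funext fun i => by
        show a i * ((((hx i).unit)⁻¹ : (R i)ˣ) : R i) = 1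
        exact (hx i).mul_val_inv,
      funext fun i => by
        show ((((hx i).unit)⁻¹ : (R i)ˣ) : R i) * a i = 1
        exact (hx i).val_inv_mul⟩, rfl⟩
end

section
/- Let f : R → T be a surjective ring homomorphism whose kernel is contained in J(R). Then R is a 2-ΔU ring if and only if T is a 2-ΔU ring. -/
/-- If `x` lies in the Jacobson radical (noncommutative), then `x + 1` is a unit. -/
lemma isUnit_add_one_of_mem_jacobson_bot {R : Type*} [Ring R] {x : R}
    (hx : x ∈ Ideal.jacobson (⊥ : Ideal R)) : IsUnit (x + 1) := by
  obtain ⟨z, hz⟩ := Ideal.exists_mul_add_sub_mem_of_mem_jacobson x hx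
  rw [Ideal.mem_bot, sub_eq_zero] at hz
  -- `z * (x + 1) = 1`.  Now find a left inverse for `z`.
  have hz1 : z - 1 ∈ Ideal.jacobson (⊥ : Ideal R) := by
    have h' : z * x + z = 1 := by rw [← hz, mul_add, mul_one]
    have : z - 1 = -(z * x) := by rw [← h']; abel
    rw [this]
    exact neg_mem (Ideal.mul_mem_left _ _ hx)
  obtain ⟨w, hw⟩ := Ideal.exists_mul_sub_mem_of_sub_one_mem_jacobson z hz1
  rw [Ideal.mem_bot, sub_eq_zero] at hw
  -- `w * z = 1` and `z * (x+1) = 1`, so `x + 1 = w` and is a unit.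
  have hxw : x + 1 = w := by
    calc x + 1 = 1 * (x + 1) := (one_mul _).symm
    _ = (w * z) * (x + 1) := by rw [hw]
    _ = w * (z * (x + 1)) := by rw [mul_assoc]
    _ = w := by rw [hz, mul_one]
  exact ⟨⟨x + 1, z, by rw [hxw]; exact hw, hz⟩, rfl⟩

lemma isUnit_of_map_isUnit {R T : Type*} [Ring R] [Ring T] (f : R →+* T)
    (hf : Function.Surjective f)
    (hker : ∀ x : R, f x = 0 → x ∈ Ideal.jacobson (⊥ : Ideal R))
    {r : R} (h : IsUnit (f r)) : IsUnit r := by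
  obtain ⟨v, hv⟩ := h
  obtain ⟨s, hs⟩ := hf (↑v⁻¹ : T)
  have h1 : IsUnit (r * s) := by
    have : f (r * s - 1) = 0 := by
      simp [map_mul, ← hv, hs, map_sub, map_one]
    have := isUnit_add_one_of_mem_jacobson_bot (hker _ this)
    simpa using this
  have h2 : IsUnit (s * r) := by
    have : f (s * r - 1) = 0 := by
      simp [map_mul, ← hv, hs, map_sub, map_one]
    have := isUnit_add_one_of_mem_jacobson_bot (hker _ this)
    simpa using this
  obtain ⟨a, ha⟩ := h1
  obtain ⟨b, hb⟩ := h2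
  have hr : r * (s * ↑a⁻¹) = 1 := by
    rw [← mul_assoc, ← ha, Units.mul_inv]
  have hl : (↑b⁻¹ * s) * r = 1 := by
    rw [mul_assoc, ← hb, Units.inv_mul]
  have heq : s * ↑a⁻¹ = ↑b⁻¹ * s := by
    calc s * ↑a⁻¹ = 1 * (s * ↑a⁻¹) := (one_mul _).symm
    _ = ((↑b⁻¹ * s) * r) * (s * ↑a⁻¹) := by rw [hl]
    _ = (↑b⁻¹ * s) * (r * (s * ↑a⁻¹)) := by simp [mul_assoc]
    _ = ↑b⁻¹ * s := by rw [hr, mul_one]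
  exact ⟨⟨r, s * ↑a⁻¹, hr, by rw [heq]; exact hl⟩, rfl⟩

theorem is2DeltaU_iff_quotient {R T : Type*} [Ring R] [Ring T] (f : R →+* T)
    (hf : Function.Surjective f)
    (hker : ∀ x : R, f x = 0 → x ∈ Ideal.jacobson (⊥ : Ideal R)) :
    Is2DeltaU R ↔ Is2DeltaU T := by
  constructor
  · intro h v w
    obtain ⟨r, hr⟩ := hf (v : T)
    obtain ⟨s, hs⟩ := hf (w : T)
    have hru : IsUnit r := isUnit_of_map_isUnit f hf hker (by rw [hr]; exact v.isUnit)
    have hsu : IsUnit s := isUnit_of_map_isUnit f hf hker (by rw [hs]; exact w.isUnit)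
    obtain ⟨u, hu⟩ := hru
    obtain ⟨x, hx⟩ := hsu
    have := (h u x).map f
    rw [map_add, map_sub, map_pow, map_one, hu, hx, hr, hs] at this
    exact this
  · intro h u w
    have := h (Units.map (f : R →* T) u) (Units.map (f : R →* T) w)
    simp only [Units.coe_map, MonoidHom.coe_coe] at this
    apply isUnit_of_map_isUnit f hf hker
    rw [map_add, map_sub, map_pow, map_one]
    exact this
end

section
/- A division ring R is a 2-ΔU ring if and only if R is isomorphic (as a ring) to ℤ/2ℤ or to ℤ/3ℤ. -/
theorem divisionRing_is2DeltaU_iff (R : Type*) [DivisionRing R] :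
    Is2DeltaU R ↔ (Nonempty (R ≃+* ZMod 2) ∨ Nonempty (R ≃+* ZMod 3)) := by
  have hDelta : ∀ r : R, r ∈ Delta R → r = 0 := by
    intro r hr
    by_contra h
    have := hr (Units.mk0 (-r) (neg_ne_zero.mpr h))
    simp at this
  constructor
  · intro h2
    have hsq : ∀ x : R, x ≠ 0 → x ^ 2 = 1 := by
      intro x hx
      have := hDelta _ (h2 (Units.mk0 x hx))
      simpa [sub_eq_zero] using this
    by_cases h2z : (2 : R) = 0
    · left
      have hchar : CharP R 2 := by
        have h1 : ringChar R ∣ 2 := ringChar.dvd (by exact_mod_cast h2z)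
        rcases (Nat.dvd_prime Nat.prime_two).mp h1 with h | h
        · exact absurd h (CharP.ringChar_ne_one)
        · exact ringChar.of_eq h
      have h01 : ∀ x : R, x = 0 ∨ x = 1 := by
        intro x
        by_cases hx : x = 0
        · exact Or.inl hx
        · right
          have hs : x * x = 1 := by have := hsq x hx; rwa [sq] at this
          have hxx : x + x = 0 := by
            rw [← two_mul, h2z, zero_mul]
          have : (x - 1) * (x - 1) = 0 := by
            have e : (x - 1) * (x - 1) = x * x - (x + x) + 1 := by noncomm_ring
            rw [e, hs, hxx]
            rw [← one_add_one_eq_two] at h2z; simpa using h2z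
          exact sub_eq_zero.mp (mul_self_eq_zero.mp this)
      refine ⟨(RingEquiv.ofBijective (ZMod.castHom (dvd_refl 2) R) ⟨?_, ?_⟩).symm⟩
      · exact (ZMod.castHom (dvd_refl 2) R).injective
      · intro x
        rcases h01 x with h | h
        · exact ⟨0, by rw [map_zero, h]⟩
        · exact ⟨1, by rw [map_one, h]⟩
    · right
      have h3z : (3 : R) = 0 := by
        have h1 : (1 : R) + 1 ≠ 0 := by
          rw [one_add_one_eq_two]; exact h2z
        have hs : ((1 : R) + 1) ^ 2 = 1 := hsq _ h1
        have h4 : (4 : R) = 1 := by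
          rw [show ((1:R)+1)^2 = 4 by norm_num] at hs; exact hs
        have h5 : (3 : R) + 1 = 0 + 1 := by
          rw [zero_add, show ((3:R)+1 : R) = 4 by norm_num, h4]
        exact add_right_cancel h5
      have hchar : CharP R 3 := by
        have h1 : ringChar R ∣ 3 := ringChar.dvd (by exact_mod_cast h3z)
        rcases (Nat.dvd_prime Nat.prime_three).mp h1 with h | h
        · exact absurd h (CharP.ringChar_ne_one)
        · exact ringChar.of_eq h
      have h013 : ∀ x : R, x = 0 ∨ x = 1 ∨ x = -1 := by
        intro x
        by_cases hx : x = 0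
        · exact Or.inl hx
        by_cases hx1 : x + 1 = 0
        · exact Or.inr (Or.inr (eq_neg_of_add_eq_zero_left hx1))
        · refine Or.inr (Or.inl ?_)
          have hs : x * x = 1 := by have := hsq x hx; rwa [sq] at this
          have hs1 : (x + 1) * (x + 1) = 1 := by
            have := hsq _ hx1; rwa [sq] at this
          have e : (x + 1) * (x + 1) = x * x + (x + x) + 1 := by noncomm_ring
          rw [e, hs] at hs1
          have h21 : (2 : R) = -1 := by
            have : (2 : R) + 1 = 0 := by rw [two_add_one_eq_three]; exact h3z
            exact eq_neg_of_add_eq_zero_left this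
          have h20 : x + x = -1 := by
            have h := hs1
            rw [add_comm (1 : R) (x + x), add_assoc, one_add_one_eq_two, h21] at h
            rwa [← sub_eq_add_neg, sub_eq_iff_eq_add, one_add_one_eq_two, h21] at h
          have hxx : (2 : R) * x = (2 : R) * 1 := by
            rw [mul_one, two_mul, h20, h21]
          exact mul_left_cancel₀ h2z hxx
      refine ⟨(RingEquiv.ofBijective (ZMod.castHom (dvd_refl 3) R) ⟨?_, ?_⟩).symm⟩
      · exact (ZMod.castHom (dvd_refl 3) R).injective
      · intro x
        rcases h013 x with h | h | h
        · exact ⟨0, by rw [map_zero, h]⟩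
        · exact ⟨1, by rw [map_one, h]⟩
        · exact ⟨-1, by rw [map_neg, map_one, h]⟩
  · intro h u v
    have h1 : (u : R) ^ 2 - 1 = 0 := by
      rcases h with h | h <;> obtain ⟨e⟩ := h
      all_goals
        have hu : IsUnit (e u) := (u.isUnit).map e.toRingHom
        have hsq : (e u) ^ 2 = 1 := by
          revert hu
          generalize (e u) = y
          revert y
          decide
        apply e.injective
        rw [map_sub, map_pow, map_one, map_zero, hsq, sub_self]
    rw [h1, zero_add]
    exact v.isUnit
end

section
/- Let R be a 2-ΔU ring and let S be a unital subring of R such that S ∩ Δ(R) ⊆ Δ(S), where Δ(S) = {s ∈ S : s + v is a unit of S for every unit v of S}. Then S is a 2-ΔU ring (i.e., every unit w of S satisfies w² - 1 ∈ Δ(S)). -/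
theorem subring_is2DeltaU (R : Type*) [Ring R] (hR : Is2DeltaU R) (S : Subring R)
    (h : ∀ s : S, (s : R) ∈ Delta R → s ∈ Delta S) :
    Is2DeltaU S := by
  intro w
  apply h
  have := hR (Units.map S.subtype.toMonoidHom w)
  simpa using this
end

section
/- For any nonzero ring R and any integer n ≥ 2, the matrix ring Mₙ(R) of n × n matrices over R is not a 2-ΔU ring. -/
set_option maxHeartbeats 1000000 in
theorem matrixRing_not_is2DeltaU (R : Type*) [Ring R] [Nontrivial R] (n : ℕ) (hn : 2 ≤ n) :
    ¬ Is2DeltaU (Matrix (Fin n) (Fin n) R) := by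
  intro h
  have h0 : (0 : ℕ) < n := by omega
  have h1 : (1 : ℕ) < n := by omega
  set i0 : Fin n := ⟨0, h0⟩ with hi0
  set i1 : Fin n := ⟨1, h1⟩ with hi1
  have hne : i0 ≠ i1 := by simp [hi0, hi1, Fin.ext_iff]
  set p : (Matrix (Fin n) (Fin n) R) := Matrix.single i0 i1 (1 : R) with hp
  set q : (Matrix (Fin n) (Fin n) R) := Matrix.single i1 i0 (1 : R) with hq
  set e00 : (Matrix (Fin n) (Fin n) R) := Matrix.single i0 i0 (1 : R) with he00
  set e11 : (Matrix (Fin n) (Fin n) R) := Matrix.single i1 i1 (1 : R) with he11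
  -- multiplication table
  have tpp : p * p = 0 := Matrix.single_mul_single_of_ne _ _ _ _ hne.symm _
  have tpq : p * q = e00 := by
    rw [hp, hq, he00, Matrix.single_mul_single_same, one_mul]
  have tpe00 : p * e00 = 0 := Matrix.single_mul_single_of_ne _ _ _ _ hne.symm _
  have tpe11 : p * e11 = p := by
    rw [hp, he11, Matrix.single_mul_single_same, one_mul]
  have tqp : q * p = e11 := by
    rw [hp, hq, he11, Matrix.single_mul_single_same, one_mul]
  have tqq : q * q = 0 := Matrix.single_mul_single_of_ne _ _ _ _ hne _
  have tqe00 : q * e00 = q := by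
    rw [hq, he00, Matrix.single_mul_single_same, one_mul]
  have tqe11 : q * e11 = 0 := Matrix.single_mul_single_of_ne _ _ _ _ hne _
  have te00p : e00 * p = p := by
    rw [hp, he00, Matrix.single_mul_single_same, one_mul]
  have te00q : e00 * q = 0 := Matrix.single_mul_single_of_ne _ _ _ _ hne _
  have te0000 : e00 * e00 = e00 := by
    rw [he00, Matrix.single_mul_single_same, one_mul]
  have te0011 : e00 * e11 = 0 := Matrix.single_mul_single_of_ne _ _ _ _ hne _
  have te11p : e11 * p = 0 := Matrix.single_mul_single_of_ne _ _ _ _ hne.symm _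
  have te11q : e11 * q = q := by
    rw [hq, he11, Matrix.single_mul_single_same, one_mul]
  have te1111 : e11 * e11 = e11 := by
    rw [he11, Matrix.single_mul_single_same, one_mul]
  have te1100 : e11 * e00 = 0 := Matrix.single_mul_single_of_ne _ _ _ _ hne.symm _
  -- units
  have hu1 : IsUnit (1 + p : (Matrix (Fin n) (Fin n) R)) := by
    refine ⟨⟨1 + p, 1 - p, ?_, ?_⟩, rfl⟩ <;>
    · simp only [mul_sub, sub_mul, mul_add, add_mul, mul_one, one_mul, tpp]
      abel
  have hu2 : IsUnit (1 - p : (Matrix (Fin n) (Fin n) R)) := by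
    refine ⟨⟨1 - p, 1 + p, ?_, ?_⟩, rfl⟩ <;>
    · simp only [mul_sub, sub_mul, mul_add, add_mul, mul_one, one_mul, tpp]
      abel
  have hu3 : IsUnit (1 + q : (Matrix (Fin n) (Fin n) R)) := by
    refine ⟨⟨1 + q, 1 - q, ?_, ?_⟩, rfl⟩ <;>
    · simp only [mul_sub, sub_mul, mul_add, add_mul, mul_one, one_mul, tqq]
      abel
  have hu4 : IsUnit (1 - q : (Matrix (Fin n) (Fin n) R)) := by
    refine ⟨⟨1 - q, 1 + q, ?_, ?_⟩, rfl⟩ <;>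
    · simp only [mul_sub, sub_mul, mul_add, add_mul, mul_one, one_mul, tqq]
      abel
  set s : (Matrix (Fin n) (Fin n) R) := 1 - e00 - e11 + p + q with hs
  have hsu : IsUnit s := by
    refine ⟨⟨s, s, ?_, ?_⟩, rfl⟩ <;>
    · simp only [hs, mul_sub, sub_mul, mul_add, add_mul, mul_one, one_mul,
        tpp, tpq, tpe00, tpe11, tqp, tqq, tqe00, tqe11,
        te00p, te00q, te0000, te0011, te11p, te11q, te1111, te1100]
      abel
  have hv : IsUnit ((1 + p) * (1 - q)) := hu1.mul hu4
  have hv' : IsUnit ((1 + q) * (1 - p)) := hu3.mul hu2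
  -- Delta memberships
  have m1 : ((1 + p : (Matrix (Fin n) (Fin n) R))) ^ 2 - 1 ∈ Delta (Matrix (Fin n) (Fin n) R) := by
    have := h hu1.unit; rwa [IsUnit.unit_spec] at this
  have m2 : ((1 + q : (Matrix (Fin n) (Fin n) R))) ^ 2 - 1 ∈ Delta (Matrix (Fin n) (Fin n) R) := by
    have := h hu3.unit; rwa [IsUnit.unit_spec] at this
  have m3 : ((1 + p) * (1 - q) : (Matrix (Fin n) (Fin n) R)) ^ 2 - 1 ∈ Delta (Matrix (Fin n) (Fin n) R) := by
    have := h hv.unit; rwa [IsUnit.unit_spec] at this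
  have m4 : ((1 + q) * (1 - p) : (Matrix (Fin n) (Fin n) R)) ^ 2 - 1 ∈ Delta (Matrix (Fin n) (Fin n) R) := by
    have := h hv'.unit; rwa [IsUnit.unit_spec] at this
  -- the chain
  have H1 : IsUnit (((1 + q) * (1 - p) : (Matrix (Fin n) (Fin n) R)) ^ 2 - 1 + s) := by
    have := m4 hsu.unit; rwa [IsUnit.unit_spec] at this
  have H2 : IsUnit (((1 + p) * (1 - q) : (Matrix (Fin n) (Fin n) R)) ^ 2 - 1 +
      (((1 + q) * (1 - p) : (Matrix (Fin n) (Fin n) R)) ^ 2 - 1 + s)) := by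
    have := m3 H1.unit; rwa [IsUnit.unit_spec] at this
  have H3 : IsUnit (((1 + q : (Matrix (Fin n) (Fin n) R))) ^ 2 - 1 + (((1 + p) * (1 - q) : (Matrix (Fin n) (Fin n) R)) ^ 2 - 1 +
      (((1 + q) * (1 - p) : (Matrix (Fin n) (Fin n) R)) ^ 2 - 1 + s))) := by
    have := m2 H2.unit; rwa [IsUnit.unit_spec] at this
  have H4 : IsUnit (((1 + p : (Matrix (Fin n) (Fin n) R))) ^ 2 - 1 + (((1 + q : (Matrix (Fin n) (Fin n) R))) ^ 2 - 1 +
      (((1 + p) * (1 - q) : (Matrix (Fin n) (Fin n) R)) ^ 2 - 1 +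
      (((1 + q) * (1 - p) : (Matrix (Fin n) (Fin n) R)) ^ 2 - 1 + s)))) := by
    have := m1 H3.unit; rwa [IsUnit.unit_spec] at this
  -- the contradiction
  set c : (Matrix (Fin n) (Fin n) R) := e00 + q with hc
  have tpc : p * c = e00 := by rw [hc, mul_add, tpe00, tpq, zero_add]
  have tqc : q * c = q := by rw [hc, mul_add, tqe00, tqq, add_zero]
  have te00c : e00 * c = e00 := by rw [hc, mul_add, te0000, te00q, add_zero]
  have te11c : e11 * c = q := by rw [hc, mul_add, te1100, te11q, zero_add]
  have key : (((1 + p : (Matrix (Fin n) (Fin n) R))) ^ 2 - 1 + (((1 + q : (Matrix (Fin n) (Fin n) R))) ^ 2 - 1 +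
      (((1 + p) * (1 - q) : (Matrix (Fin n) (Fin n) R)) ^ 2 - 1 +
      (((1 + q) * (1 - p) : (Matrix (Fin n) (Fin n) R)) ^ 2 - 1 + s)))) * c = 0 := by
    simp only [hs, pow_two, mul_sub, sub_mul, mul_add, add_mul, mul_one, one_mul, mul_assoc,
      tpp, tpq, tpe00, tpe11, tqp, tqq, tqe00, tqe11,
      te00p, te00q, te0000, te0011, te11p, te11q, te1111, te1100,
      tpc, tqc, te00c, te11c, zero_mul, mul_zero, zero_add, add_zero, sub_zero, zero_sub]
    rw [hc]
    abel
  obtain ⟨t, ht⟩ := H4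
  have htc : t.val * c = 0 := by rw [ht]; exact key
  have hc0 : c = 0 := by
    calc c = (t⁻¹).val * (t.val * c) := by
            rw [← mul_assoc, Units.inv_mul, one_mul]
      _ = 0 := by rw [htc, mul_zero]
  have h00 := congrFun (congrFun hc0 i0) i0
  rw [hc, he00, hq] at h00
  simp only [Matrix.add_apply, Matrix.zero_apply, Matrix.single_apply_same,
    Matrix.single_apply_of_row_ne hne.symm, add_zero] at h00
  exact one_ne_zero h00
end

section
/- Every 2-ΔU ring is Dedekind-finite: if R is a 2-ΔU ring and a, b ∈ R satisfy a·b = 1, then b·a = 1. -/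
set_option maxHeartbeats 2000000 in
theorem is2DeltaU_dedekindFinite (R : Type*) [Ring R] (hR : Is2DeltaU R)
    (a b : R) (hab : a * b = 1) : b * a = 1 := by
  have hab' : ∀ x : R, a * (b * x) = x := by
    intro x; rw [← mul_assoc, hab, one_mul]
  obtain ⟨f, hf⟩ : ∃ f : R, f = 1 - b * a := ⟨_, rfl⟩
  have haf0 : a * f = 0 := by
    rw [hf, mul_sub, mul_one, ← mul_assoc, hab, one_mul, sub_self]
  have haf : ∀ x : R, a * (f * x) = 0 := by
    intro x; rw [← mul_assoc, haf0, zero_mul]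
  have hfb0 : f * b = 0 := by
    rw [hf, sub_mul, one_mul, mul_assoc, hab, mul_one, sub_self]
  have hfb : ∀ x : R, f * (b * x) = 0 := by
    intro x; rw [← mul_assoc, hfb0, zero_mul]
  have hba : (b * a) * (b * a) = b * a := by
    rw [mul_assoc, hab']
  have hff0 : f * f = f := by
    rw [hf, sub_mul, one_mul, mul_sub, mul_one, hba]
    abel
  have hff : ∀ x : R, f * (f * x) = f * x := by
    intro x; rw [← mul_assoc, hff0]
  obtain ⟨u, hu⟩ : ∃ u : R, u = 1 - f - f - f*a - b*(f*a) - b*(f*(a*a)) - b*(b*(f*a))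
      - b*(b*(f*(a*a))) := ⟨_, rfl⟩
  obtain ⟨u', hu'⟩ : ∃ u' : R, u' = 1 - f - f + f*(a*a) - b*(f*a) - b*(f*(a*a)) - b*(b*(f*a))
      - b*(b*(f*(a*a))) := ⟨_, rfl⟩
  obtain ⟨w, hw⟩ : ∃ w : R, w = 1 - f - f*a - b*(f*a) - b*(f*(a*a)) + b*(b*f)
      - b*(b*(f*(a*a))) := ⟨_, rfl⟩
  obtain ⟨w', hw'⟩ : ∃ w' : R, w' = 1 - f + f*(a*a) - b*f - b*(f*a) - b*(b*(f*a))
      - b*(b*(f*(a*a))) := ⟨_, rfl⟩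
  have huu' : u * u' = 1 := by
    rw [hu, hu']
    simp only [mul_sub, sub_mul, mul_add, add_mul, mul_one, one_mul, mul_assoc,
      hab', haf, hfb, hff, haf0, hfb0, hff0, hab, mul_zero, zero_mul, sub_zero, zero_sub,
      add_zero, zero_add, neg_zero, neg_neg]
    abel
  have hu'u : u' * u = 1 := by
    rw [hu, hu']
    simp only [mul_sub, sub_mul, mul_add, add_mul, mul_one, one_mul, mul_assoc,
      hab', haf, hfb, hff, haf0, hfb0, hff0, hab, mul_zero, zero_mul, sub_zero, zero_sub,
      add_zero, zero_add, neg_zero, neg_neg]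
    abel
  have hww' : w * w' = 1 := by
    rw [hw, hw']
    simp only [mul_sub, sub_mul, mul_add, add_mul, mul_one, one_mul, mul_assoc,
      hab', haf, hfb, hff, haf0, hfb0, hff0, hab, mul_zero, zero_mul, sub_zero, zero_sub,
      add_zero, zero_add, neg_zero, neg_neg]
    abel
  have hw'w : w' * w = 1 := by
    rw [hw, hw']
    simp only [mul_sub, sub_mul, mul_add, add_mul, mul_one, one_mul, mul_assoc,
      hab', haf, hfb, hff, haf0, hfb0, hff0, hab, mul_zero, zero_mul, sub_zero, zero_sub,
      add_zero, zero_add, neg_zero, neg_neg]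
    abel
  have hm : u * u - 1 = f*a + f*(a*a) := by
    rw [hu]
    simp only [mul_sub, sub_mul, mul_add, add_mul, mul_one, one_mul, mul_assoc,
      hab', haf, hfb, hff, haf0, hfb0, hff0, hab, mul_zero, zero_mul, sub_zero, zero_sub,
      add_zero, zero_add, neg_zero, neg_neg]
    abel
  have hmem : (u * u - 1) ∈ Delta R := by
    have := hR ⟨u, u', huu', hu'u⟩
    rwa [show ((⟨u, u', huu', hu'u⟩ : Rˣ) : R) = u from rfl, sq] at this
  obtain ⟨E, hEdef⟩ : ∃ E : R, E = b*(b*(f*a)) + b*(b*(f*(a*a))) := ⟨_, rfl⟩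
  have hE : w * (u * u - 1) = E := by
    rw [hm, hw, hEdef]
    simp only [mul_sub, sub_mul, mul_add, add_mul, mul_one, one_mul, mul_assoc,
      hab', haf, hfb, hff, haf0, hfb0, hff0, hab, mul_zero, zero_mul, sub_zero, zero_sub,
      add_zero, zero_add, neg_zero, neg_neg]
    abel
  have hWmul : w' * w = 1 := hw'w
  have hEmem : E ∈ Delta R := by
    intro v
    set W : Rˣ := ⟨w, w', hww', hw'w⟩ with hWdef
    have h1 : IsUnit ((u * u - 1) + ((W⁻¹ * v : Rˣ) : R)) := hmem (W⁻¹ * v)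
    have h2 : E + (v : R) = w * ((u * u - 1) + ((W⁻¹ * v : Rˣ) : R)) := by
      rw [mul_add, hE, Units.val_mul, ← mul_assoc]
      have hw1 : w * ((W⁻¹ : Rˣ) : R) = 1 := W.mul_inv
      rw [hw1, one_mul]
    rw [h2]
    exact (W.isUnit).mul h1
  have hEE : E * E = E := by
    rw [hEdef]
    simp only [mul_sub, sub_mul, mul_add, add_mul, mul_one, one_mul, mul_assoc,
      hab', haf, hfb, hff, haf0, hfb0, hff0, hab, mul_zero, zero_mul, sub_zero, zero_sub,
      add_zero, zero_add, neg_zero, neg_neg]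
  have hunit : IsUnit (E - 1) := by
    have := hEmem (-1)
    simpa [sub_eq_add_neg] using this
  obtain ⟨c, hc⟩ := hunit
  have hE0 : E = 0 := by
    have h0 : E * (E - 1) = 0 := by rw [mul_sub, hEE, mul_one, sub_self]
    have h3 : E * ((c : R) * ((c⁻¹ : Rˣ) : R)) = 0 := by
      rw [← mul_assoc, hc, h0, zero_mul]
    rwa [Units.mul_inv, mul_one] at h3
  have hf0 : f = 0 := by
    have h4 : a * (a * (E * (b * b))) = f := by
      rw [hEdef]
      simp only [mul_sub, sub_mul, mul_add, add_mul, mul_one, one_mul, mul_assoc,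
        hab', haf, hfb, hff, haf0, hfb0, hff0, hab, mul_zero, zero_mul, sub_zero, zero_sub,
        add_zero, zero_add, neg_zero, neg_neg]
    rw [hE0, zero_mul, mul_zero, mul_zero] at h4
    exact h4.symm
  rw [hf] at hf0
  have := sub_eq_zero.mp hf0
  exact this.symm
end

section
/- For an integer m ≥ 1, the ring ℤ/mℤ is a 2-ΔU ring if and only if m = 2^k · 3^l for some nonnegative integers k and l. -/
lemma isUnit_pair {M N : Type*} [Monoid M] [Monoid N] {a : M} {b : N}
    (ha : IsUnit a) (hb : IsUnit b) : IsUnit ((a, b) : M × N) := by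
  refine ⟨⟨(a, b), ((↑ha.unit⁻¹ : M), (↑hb.unit⁻¹ : N)), ?_, ?_⟩, rfl⟩ <;>
    simp [Prod.ext_iff]

/-- If every prime factor of `m` is 2 or 3 then `m = 2^k * 3^l`. -/
lemma factor23 (m : ℕ) (hm : m ≠ 0)
    (h : ∀ p : ℕ, p.Prime → p ∣ m → p = 2 ∨ p = 3) :
    ∃ k l : ℕ, m = 2 ^ k * 3 ^ l := by
  induction m using Nat.strong_induction_on with
  | _ m ih =>
    rcases eq_or_ne m 1 with rfl | h1
    · exact ⟨0, 0, rfl⟩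
    have hp : m.minFac.Prime := Nat.minFac_prime h1
    obtain ⟨n, hn⟩ := Nat.minFac_dvd m
    have hn0 : n ≠ 0 := by rintro rfl; simp at hn; exact hm hn
    have hnlt : n < m := by
      rw [hn]
      exact lt_mul_of_one_lt_left (Nat.pos_of_ne_zero hn0) hp.one_lt
    obtain ⟨k, l, hkl⟩ := ih n hnlt hn0
      (fun p hp' hdvd => h p hp' (hn ▸ hdvd.mul_left _))
    rcases h m.minFac hp (Nat.minFac_dvd m) with h2 | h3
    · exact ⟨k + 1, l, by rw [hn, hkl, h2]; ring⟩
    · exact ⟨k, l + 1, by rw [hn, hkl, h3]; ring⟩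

/-- Backward direction, general form. -/
lemma backward' (m : ℕ) (hm0 : m ≠ 0)
    (hfac : ∀ p : ℕ, p.Prime → p ∣ m → p = 2 ∨ p = 3) : Is2DeltaU (ZMod m) := by
  haveI : NeZero m := ⟨hm0⟩
  intro u v
  set w : ZMod m := (u : ZMod m) ^ 2 - 1 + (v : ZMod m) with hw
  have key : ∀ p : ℕ, (p = 2 ∨ p = 3) → p ∣ m → ¬ (p ∣ w.val) := by
    intro p hp hpm hdvd
    haveI : Fact (1 < p) := ⟨by rcases hp with rfl | rfl <;> norm_num⟩
    haveI : NeZero p := ⟨by rcases hp with rfl | rfl <;> norm_num⟩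
    have h0 : ((w.val : ZMod p)) = 0 := (ZMod.natCast_eq_zero_iff _ _).mpr hdvd
    let f : ZMod m →+* ZMod p := ZMod.castHom hpm (ZMod p)
    have hfw : f w = (w.val : ZMod p) := by
      rw [ZMod.castHom_apply, ← ZMod.natCast_val]
    have hfw0 : f w = 0 := hfw.trans h0
    have hu : IsUnit (f u) := u.isUnit.map f
    have hv : IsUnit (f v) := v.isUnit.map f
    have hfw' : f w = (f u) ^ 2 - 1 + f v := by
      rw [hw]; push_cast [map_add, map_sub, map_pow, map_one]; ring
    rcases hp with rfl | rfl
    · have : ∀ a b : ZMod 2, IsUnit a → IsUnit b → a ^ 2 - 1 + b ≠ 0 := by decide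
      exact this _ _ hu hv (hfw' ▸ hfw0)
    · have : ∀ a b : ZMod 3, IsUnit a → IsUnit b → a ^ 2 - 1 + b ≠ 0 := by decide
      exact this _ _ hu hv (hfw' ▸ hfw0)
  have hcop : Nat.Coprime w.val m := by
    by_contra hc
    have hg1 : Nat.gcd w.val m ≠ 1 := hc
    have hg0 : Nat.gcd w.val m ≠ 0 := fun h => hm0 (Nat.eq_zero_of_gcd_eq_zero_right h)
    set g := Nat.gcd w.val m with hg
    have hq : g.minFac.Prime := Nat.minFac_prime hg1
    have hqw : g.minFac ∣ w.val := (Nat.minFac_dvd g).trans (Nat.gcd_dvd_left _ _)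
    have hqm : g.minFac ∣ m := (Nat.minFac_dvd g).trans (Nat.gcd_dvd_right _ _)
    exact key g.minFac (hfac g.minFac hq hqm) hqm hqw
  have := (ZMod.isUnit_iff_coprime w.val m).mpr hcop
  rwa [ZMod.natCast_val, ZMod.cast_id] at this

theorem zmod_is2DeltaU_iff (m : ℕ) (hm : 1 ≤ m) :
    Is2DeltaU (ZMod m) ↔ ∃ k l : ℕ, m = 2 ^ k * 3 ^ l := by
  constructor
  · intro H
    refine factor23 m (by omega) ?_
    intro p hp hpm
    by_contra hcon
    push_neg at hcon
    obtain ⟨hp2, hp3⟩ := hcon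
    set a := m.factorization p with ha
    set n := m / p ^ a with hn
    have hmn : m = p ^ a * n := (Nat.ordProj_mul_ordCompl_eq_self m p).symm
    have hcop : Nat.Coprime (p ^ a) n :=
      Nat.Coprime.pow_left _ (Nat.coprime_ordCompl hp (by omega))
    have ha1 : 1 ≤ a := (Nat.Prime.factorization_pos_of_dvd hp (by omega) hpm)
    haveI : Fact (1 < p ^ a) :=
      ⟨lt_of_lt_of_le hp.one_lt (Nat.le_self_pow (by omega) p)⟩
    haveI : NeZero n := ⟨by intro h; rw [h] at hmn; simp at hmn; omega⟩
    let e : ZMod m ≃+* ZMod (p ^ a) × ZMod n := hmn ▸ ZMod.chineseRemainder hcop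
    have h2 : IsUnit ((2 : ZMod (p ^ a))) := by
      have : ((2 : ℕ) : ZMod (p ^ a)) = 2 := by norm_cast
      rw [← this, ZMod.isUnit_iff_coprime]
      exact Nat.Coprime.pow_right _ ((Nat.coprime_primes Nat.prime_two hp).mpr
        (fun h => hp2 h.symm))
    have h3 : IsUnit ((-3 : ZMod (p ^ a))) := by
      rw [IsUnit.neg_iff]
      have : ((3 : ℕ) : ZMod (p ^ a)) = 3 := by norm_cast
      rw [← this, ZMod.isUnit_iff_coprime]
      exact Nat.Coprime.pow_right _ ((Nat.coprime_primes Nat.prime_three hp).mpr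
        (fun h => hp3 h.symm))
    have hu : IsUnit (e.symm ((2 : ZMod (p ^ a)), (1 : ZMod n))) :=
      (isUnit_pair h2 isUnit_one).map e.symm.toRingHom
    have hv : IsUnit (e.symm ((-3 : ZMod (p ^ a)), (1 : ZMod n))) :=
      (isUnit_pair h3 isUnit_one).map e.symm.toRingHom
    have hbad := H hu.unit hv.unit
    rw [IsUnit.unit_spec, IsUnit.unit_spec] at hbad
    have hmap := hbad.map e.toRingHom
    simp only [RingEquiv.toRingHom_eq_coe, RingHom.coe_coe] at hmap
    have heval : e ((e.symm ((2 : ZMod (p ^ a)), (1 : ZMod n))) ^ 2 - 1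
        + e.symm ((-3 : ZMod (p ^ a)), (1 : ZMod n)))
        = ((0 : ZMod (p ^ a)), (1 : ZMod n)) := by
      rw [map_add, map_sub, map_pow, map_one, RingEquiv.apply_symm_apply,
        RingEquiv.apply_symm_apply]
      norm_num [Prod.ext_iff]
    rw [heval] at hmap
    have h0 : IsUnit ((0 : ZMod (p ^ a))) := by
      simpa using hmap.map (RingHom.fst (ZMod (p ^ a)) (ZMod n))
    exact h0.ne_zero rfl
  · rintro ⟨k, l, rfl⟩
    refine backward' _ (by positivity) ?_
    intro p hp hpm
    rcases (Nat.Prime.dvd_mul hp).mp hpm with h | h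
    · exact Or.inl ((Nat.prime_dvd_prime_iff_eq hp Nat.prime_two).mp
        (hp.dvd_of_dvd_pow h))
    · exact Or.inr ((Nat.prime_dvd_prime_iff_eq hp Nat.prime_three).mp
        (hp.dvd_of_dvd_pow h))
end

section
/- Let R be a 2-ΔU ring with J(R) = 0 such that every nonzero right ideal of R contains a nonzero idempotent (equivalently, for every nonzero a ∈ R there is a nonzero idempotent e lying in the right ideal aR). Then R is reduced. -/
lemma lemA {R : Type*} [Ring R] (hR : Is2DeltaU R) (f X w B : R)
    (hff : f*f = f) (hfX : f*X = X) (hfw : f*w = 0) (hfB : f*B = 0)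
    (hXf : X*f = 0) (hXX : X*X = 0) (hXw : X*w = f) (hXB : X*B = X)
    (hwf : w*f = w) (hwX : w*X = B) (hww : w*w = 0) (hwB : w*B = 0)
    (hBf : B*f = 0) (hBX : B*X = 0) (hBw : B*w = w) (hBB : B*B = B) :
    f = 0 := by
  have P1 : (X - w - B + (1 - (f + B))) * (w - f - X + (1 - (f + B))) = 1 := by
    simp only [sub_mul, mul_sub, add_mul, mul_add, one_mul, mul_one,
      hff, hfX, hfw, hfB, hXf, hXX, hXw, hXB, hwf, hwX, hww, hwB, hBf, hBX, hBw, hBB]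
    abel
  have P2 : (w - f - X + (1 - (f + B))) * (X - w - B + (1 - (f + B))) = 1 := by
    simp only [sub_mul, mul_sub, add_mul, mul_add, one_mul, mul_one,
      hff, hfX, hfw, hfB, hXf, hXX, hXw, hXB, hwf, hwX, hww, hwB, hBf, hBX, hBw, hBB]
    abel
  have P3 : (1 + (f + X - w - B)) * (1 - (f + X - w - B)) = 1 := by
    simp only [sub_mul, mul_sub, add_mul, mul_add, one_mul, mul_one,
      hff, hfX, hfw, hfB, hXf, hXX, hXw, hXB, hwf, hwX, hww, hwB, hBf, hBX, hBw, hBB]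
    abel
  have P4 : (1 - (f + X - w - B)) * (1 + (f + X - w - B)) = 1 := by
    simp only [sub_mul, mul_sub, add_mul, mul_add, one_mul, mul_one,
      hff, hfX, hfw, hfB, hXf, hXX, hXw, hXB, hwf, hwX, hww, hwB, hBf, hBX, hBw, hBB]
    abel
  have hd := hR ⟨_, _, P1, P2⟩ ⟨_, _, P3, P4⟩
  have P5 : ((X - w - B + (1 - (f + B))) ^ 2 - 1) + (1 + (f + X - w - B))
      = 1 - f - (B + B) := by
    rw [pow_two]
    simp only [sub_mul, mul_sub, add_mul, mul_add, one_mul, mul_one,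
      hff, hfX, hfw, hfB, hXf, hXX, hXw, hXB, hwf, hwX, hww, hwB, hBf, hBX, hBw, hBB]
    abel
  rw [P5] at hd
  obtain ⟨c, hc⟩ := hd.exists_left_inv
  have P6 : (1 - f - (B + B)) * f = 0 := by
    simp only [sub_mul, add_mul, one_mul, hff, hBf]
    abel
  calc f = (c * (1 - f - (B + B))) * f := by rw [hc, one_mul]
    _ = c * ((1 - f - (B + B)) * f) := mul_assoc _ _ _
    _ = 0 := by rw [P6, mul_zero]

theorem is2DeltaU_reduced (R : Type*) [Ring R] (hR : Is2DeltaU R)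
    (hJ : Ideal.jacobson (⊥ : Ideal R) = ⊥)
    (hid : ∀ a : R, a ≠ 0 → ∃ e : R, e ≠ 0 ∧ e * e = e ∧ ∃ r : R, e = a * r) :
    IsReduced R := by
  have sq : ∀ x : R, x * x = 0 → x = 0 := by
    intro x hx
    by_contra hxne
    obtain ⟨f, hfne, hff, t, hft⟩ := hid x hxne
    apply hfne
    -- basic relations
    have hxf : x * f = 0 := by rw [hft, ← mul_assoc, hx, zero_mul]
    have hxa : x * (t * f) = f := by rw [← mul_assoc, ← hft, hff]
    set w : R := t * f - f * (t * f) with hw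
    -- multiplication by w on the right
    have L1 : ∀ z : R, z * f = z → z * w = 0 := by
      intro z hz
      rw [hw, mul_sub, ← mul_assoc z f, hz, sub_self]
    have L2 : ∀ z : R, z * f = 0 → z * w = z * (t * f) := by
      intro z hz
      rw [hw, mul_sub, ← mul_assoc z f, hz, zero_mul, sub_zero]
    have hwf : w * f = w := by
      rw [hw, sub_mul, mul_assoc t f f, hff, mul_assoc f (t*f) f, mul_assoc t f f, hff]
    have hfw : f * w = 0 := L1 f hff
    have hww : w * w = 0 := L1 w hwf
    have hxw : x * w = f := by rw [L2 x hxf, hxa]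
    set X : R := f * x with hX
    set B : R := w * x with hB
    have hfX : f * X = X := by rw [hX, ← mul_assoc, hff]
    have hXf : X * f = 0 := by rw [hX, mul_assoc, hxf, mul_zero]
    have hxX : x * X = 0 := by rw [hX, ← mul_assoc, hxf, zero_mul]
    have hxB : x * B = X := by rw [hB, ← mul_assoc, hxw, ← hX]
    have hXX : X * X = 0 := by rw [hX, mul_assoc, hxX, mul_zero]
    have hXw : X * w = f := by rw [L2 X hXf, hX, mul_assoc, hxa, hff]
    have hwX : w * X = B := by rw [hX, ← mul_assoc, hwf, ← hB]
    have hwB : w * B = 0 := by rw [hB, ← mul_assoc, hww, zero_mul]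
    have hBf : B * f = 0 := by rw [hB, mul_assoc, hxf, mul_zero]
    have hfB : f * B = 0 := by rw [hB, ← mul_assoc, hfw, zero_mul]
    have hBX : B * X = 0 := by rw [hB, mul_assoc, hxX, mul_zero]
    have hxwx : x * (w * x) = X := by rw [← mul_assoc, hxw, ← hX]
    have hBB : B * B = B := by rw [hB, mul_assoc, hxwx, hwX]
    have hBw : B * w = w := by rw [L2 B hBf, hB, mul_assoc, hxa, hwf]
    have hXB : X * B = X := by rw [hB, ← mul_assoc, hXw, ← hX]
    exact lemA hR f X w B hff hfX hfw hfB hXf hXX hXw hXB hwf hwX hww hwB hBf hBX hBw hBB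
  refine (isReduced_iff_pow_one_lt 2 one_lt_two).mpr fun x hx2 => ?_
  exact sq x (by rwa [pow_two] at hx2)
end

section
/- A ring R is a ΔU ring if and only if the following three conditions hold: (i) 2 ∈ Δ(R); (ii) R is a 2-ΔU ring; (iii) for every x ∈ R, if x² ∈ Δ(R) then x ∈ Δ(R). -/
lemma Delta.add_mem {R : Type*} [Ring R] {r s : R} (hr : r ∈ Delta R) (hs : s ∈ Delta R) :
    r + s ∈ Delta R := by
  intro u
  obtain ⟨v, hv⟩ := hs u
  have := hr v
  rw [hv] at this
  rwa [add_assoc]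

lemma Delta.neg_mem {R : Type*} [Ring R] {r : R} (hr : r ∈ Delta R) : -r ∈ Delta R := by
  intro u
  have := (hr (-u)).neg
  have h : -(r + ((-u : Rˣ) : R)) = -r + (u : R) := by
    simp [Units.val_neg]; abel
  rwa [h] at this

lemma Delta.unit_mul_mem {R : Type*} [Ring R] {r : R} (hr : r ∈ Delta R) (u : Rˣ) :
    (u : R) * r ∈ Delta R := by
  intro v
  have h := (u.isUnit).mul (hr (u⁻¹ * v))
  have heq : (u : R) * (r + ((u⁻¹ * v : Rˣ) : R)) = (u : R) * r + (v : R) := by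
    rw [Units.val_mul, mul_add, ← mul_assoc]
    simp
  rwa [heq] at h

/-- If `x ^ 2 ∈ Δ(R)` then `1 + x` is a unit. -/
lemma isUnit_one_add_of_sq_mem_delta {R : Type*} [Ring R] {x : R} (hx : x ^ 2 ∈ Delta R) :
    IsUnit (1 + x) := by
  have h := (hx (-1)).neg
  have h1 : -(x ^ 2 + ((-1 : Rˣ) : R)) = 1 - x ^ 2 := by
    simp; noncomm_ring
  rw [h1] at h
  obtain ⟨w, hw⟩ := h
  have hr : (1 + x) * (1 - x) = (w : R) := by rw [hw]; noncomm_ring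
  have hl : (1 - x) * (1 + x) = (w : R) := by rw [hw]; noncomm_ring
  refine isUnit_iff_exists.mpr ⟨(1 - x) * (w⁻¹ : Rˣ), ?_, ?_⟩
  · rw [← mul_assoc, hr]; simp
  · -- left inverse: first show (↑w⁻¹ * (1 - x)) is a left inverse, then equate
    have hc : ((w⁻¹ : Rˣ) : R) * (1 - x) * (1 + x) = 1 := by
      rw [mul_assoc, hl]; simp
    have hb : (1 - x) * ((w⁻¹ : Rˣ) : R) = ((w⁻¹ : Rˣ) : R) * (1 - x) := by
      calc (1 - x) * ((w⁻¹ : Rˣ) : R)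
          = (((w⁻¹ : Rˣ) : R) * (1 - x) * (1 + x)) * ((1 - x) * ((w⁻¹ : Rˣ) : R)) := by
            rw [hc, one_mul]
        _ = ((w⁻¹ : Rˣ) : R) * (1 - x) * (((1 + x) * (1 - x)) * ((w⁻¹ : Rˣ) : R)) := by
            noncomm_ring
        _ = ((w⁻¹ : Rˣ) : R) * (1 - x) := by rw [hr]; simp
    rw [hb, hc]

theorem isDeltaU_iff_is2DeltaU (R : Type*) [Ring R] :
    IsDeltaU R ↔
      ((2 : R) ∈ Delta R ∧ Is2DeltaU R ∧ ∀ x : R, x ^ 2 ∈ Delta R → x ∈ Delta R) := by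
  constructor
  · intro h
    have h2 : (2 : R) ∈ Delta R := by
      have := Delta.neg_mem (h (-1))
      have heq : -(((-1 : Rˣ) : R) - 1) = (2 : R) := by simp; norm_num
      rwa [heq] at this
    refine ⟨h2, ?_, ?_⟩
    · intro u
      have h1 := h u
      have h2' := Delta.unit_mul_mem h1 u
      have := Delta.add_mem h2' h1
      have heq : (u : R) * ((u : R) - 1) + ((u : R) - 1) = (u : R) ^ 2 - 1 := by noncomm_ring
      rwa [heq] at this
    · intro x hx
      obtain ⟨v, hv⟩ := isUnit_one_add_of_sq_mem_delta hx
      have := h v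
      rw [hv] at this
      simpa using this
  · rintro ⟨h2, hsq, h3⟩
    intro u
    apply h3
    have hu2 : (2 : R) * (u : R) ∈ Delta R := by
      have := Delta.unit_mul_mem h2 u
      rwa [show (u : R) * 2 = 2 * (u : R) by rw [mul_two, two_mul]] at this
    have := Delta.add_mem (Delta.add_mem (hsq u) (Delta.neg_mem hu2)) h2
    have heq : (u : R) ^ 2 - 1 + -((2 : R) * (u : R)) + 2 = ((u : R) - 1) ^ 2 := by
      rw [sq, sq, two_mul, ← one_add_one_eq_two, mul_sub, sub_mul, mul_one, one_mul]; abel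
    rwa [heq] at this
end
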